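/- arXiv:2008.03887 — 9 statements merged into one kernel-verified Lean document; each statement's English description precedes it below -/
import Mathlib

section
/- Let G = K_{n_1} × K_{n_2} × ... × K_{n_t} be a direct product of complete graphs with t ≥ 3 and n_i ≥ t+1 for all i. Then the domination number and total domination number of G both equal t+1. -/
set_option linter.unusedVariables false
set_option linter.unnecessarySeqFocus false

open SimpleGraph

variable {V : Type*} {W : Type*}

/-- The direct (tensor) product of two simple graphs. -/
def SimpleGraph.tensor (G : SimpleGraph V) (H : SimpleGraph W) : SimpleGraph (V × W) where
  Adj p q := G.Adj p.1 q.1 ∧ H.Adj p.2 q.2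
  symm := ⟨fun p q h => ⟨h.1.symm, h.2.symm⟩⟩
  loopless := ⟨fun p h => G.irrefl h.1⟩

/-- A dominating set: every vertex is in `D` or adjacent to a member of `D`. -/
def SimpleGraph.Dominating (G : SimpleGraph V) (D : Set V) : Prop :=
  ∀ v, ∃ u ∈ D, u = v ∨ G.Adj u v

/-- The domination number. -/
noncomputable def SimpleGraph.domNum (G : SimpleGraph V) : ℕ :=
  sInf {n | ∃ D : Set V, G.Dominating D ∧ D.ncard = n}

/-- A total dominating set. -/
def SimpleGraph.TotalDominating (G : SimpleGraph V) (D : Set V) : Prop :=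
  ∀ v, ∃ u ∈ D, G.Adj u v

/-- The total domination number. -/
noncomputable def SimpleGraph.totalDomNum (G : SimpleGraph V) : ℕ :=
  sInf {n | ∃ D : Set V, G.TotalDominating D ∧ D.ncard = n}

/-- A paired dominating set: dominating and the induced subgraph has a perfect matching. -/
def SimpleGraph.PairedDominating (G : SimpleGraph V) (D : Set V) : Prop :=
  G.Dominating D ∧ ∃ M : (G.induce D).Subgraph, M.IsPerfectMatching

/-- The paired domination number. -/
noncomputable def SimpleGraph.pairedDomNum (G : SimpleGraph V) : ℕ :=
  sInf {n | ∃ D : Set V, G.PairedDominating D ∧ D.ncard = n}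

/-- A 3-packing: vertices pairwise at distance greater than 3. -/
def SimpleGraph.Packing3 (G : SimpleGraph V) (P : Set V) : Prop :=
  P.Pairwise fun u v => ¬G.Reachable u v ∨ 3 < G.dist u v

/-- The 3-packing number. -/
noncomputable def SimpleGraph.packNum3 (G : SimpleGraph V) : ℕ :=
  sSup {n | ∃ P : Set V, G.Packing3 P ∧ P.ncard = n}

/-- A minimal dominating set. -/
def SimpleGraph.MinimalDominating (G : SimpleGraph V) (D : Set V) : Prop :=
  G.Dominating D ∧ ∀ D' ⊆ D, G.Dominating D' → D' = D

/-- The upper domination number. -/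
noncomputable def SimpleGraph.upperDomNum (G : SimpleGraph V) : ℕ :=
  sSup {n | ∃ D : Set V, G.MinimalDominating D ∧ D.ncard = n}

/-- `G` has no isolated vertices. -/
def SimpleGraph.NoIsolated (G : SimpleGraph V) : Prop := ∀ v, ∃ u, G.Adj u v

/-- Direct product of complete graphs `K_{n 0} × ... × K_{n (t-1)}`:
tuples adjacent iff they differ in every coordinate. -/
def prodCompleteGraphs {t : ℕ} (n : Fin t → ℕ) : SimpleGraph (∀ i, Fin (n i)) where
  Adj a b := a ≠ b ∧ ∀ i, a i ≠ b i
  symm := ⟨fun a b h => ⟨h.1.symm, fun i => (h.2 i).symm⟩⟩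
  loopless := ⟨fun a h => h.1 rfl⟩

/-- `G` together with a new pendant vertex (`none`) attached to `v`. -/
def addPendant (G : SimpleGraph V) (v : V) : SimpleGraph (Option V) where
  Adj x y :=
    match x, y with
    | some a, some b => G.Adj a b
    | some a, none => a = v
    | none, some b => b = v
    | none, none => False
  symm := by
    constructor
    rintro (_ | a) (_ | b) h <;> simp_all [SimpleGraph.adj_comm]
  loopless := by
    constructor
    rintro (_ | a) h <;> simp_all

/-- `G` with a path on `ℓ` vertices appended to vertex `u` via a bridge. -/
def appendPath (G : SimpleGraph V) (u : V) (ℓ : ℕ) : SimpleGraph (V ⊕ Fin ℓ) where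
  Adj x y :=
    match x, y with
    | Sum.inl a, Sum.inl b => G.Adj a b
    | Sum.inl a, Sum.inr j => a = u ∧ (j : ℕ) = 0
    | Sum.inr i, Sum.inl b => b = u ∧ (i : ℕ) = 0
    | Sum.inr i, Sum.inr j => (i : ℕ) + 1 = j ∨ (j : ℕ) + 1 = i
  symm := by
    constructor
    rintro (a | i) (b | j) h <;> simp_all [SimpleGraph.adj_comm] <;> tauto
  loopless := by
    constructor
    rintro (a | i) h <;> simp_all

/-- `G` with a pendant path on two vertices `(v,1)–(v,2)` attached to each vertex `(v,0)`. -/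
def attachPaths2 (G : SimpleGraph V) : SimpleGraph (V × Fin 3) where
  Adj p q :=
    (p.2 = 0 ∧ q.2 = 0 ∧ G.Adj p.1 q.1) ∨
    (p.1 = q.1 ∧ ((p.2 = 0 ∧ q.2 = 1) ∨ (p.2 = 1 ∧ q.2 = 0) ∨
      (p.2 = 1 ∧ q.2 = 2) ∨ (p.2 = 2 ∧ q.2 = 1)))
  symm := by
    constructor
    rintro ⟨a, i⟩ ⟨b, j⟩ h <;> simp_all [SimpleGraph.adj_comm] <;> tauto
  loopless := by
    constructor
    rintro ⟨a, i⟩ h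
    rcases h with ⟨-, -, h⟩ | ⟨-, h⟩
    · exact G.irrefl h
    · rcases h with ⟨h1, h2⟩ | ⟨h1, h2⟩ | ⟨h1, h2⟩ | ⟨h1, h2⟩ <;> simp_all

lemma exists_avoid {t m : ℕ} (h : t < m) (f : Fin t → Fin m) : ∃ c : Fin m, ∀ j, f j ≠ c := by
  by_contra hc
  push_neg at hc
  have hs : Function.Surjective f := fun c => hc c
  have := Fintype.card_le_of_surjective f hs
  simp only [Fintype.card_fin] at this
  omega

lemma upper_bound {t : ℕ} (ht : 3 ≤ t) (n : Fin t → ℕ) (hn : ∀ i, t + 1 ≤ n i) :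
    ∃ D : Set (∀ i, Fin (n i)), (prodCompleteGraphs n).TotalDominating D ∧ D.ncard = t + 1 := by
  have i₀ : Fin t := ⟨0, by omega⟩
  set d : Fin (t + 1) → ∀ i, Fin (n i) :=
    fun k i => ⟨k.val, lt_of_lt_of_le k.isLt (hn i)⟩ with hd
  refine ⟨Set.range d, ?_, ?_⟩
  · intro v
    obtain ⟨k, hk⟩ := exists_avoid (Nat.lt_succ_self t) (fun i : Fin t =>
      if h : (v i).val < t + 1 then (⟨(v i).val, h⟩ : Fin (t + 1)) else ⟨0, by omega⟩)
    have hvals : ∀ i, (v i).val ≠ k.val := by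
      intro i hv
      have h1 : (v i).val < t + 1 := hv ▸ k.isLt
      apply hk i
      simp only [dif_pos h1]
      exact Fin.ext hv
    have hadj : ∀ i, d k i ≠ v i := by
      intro i he
      exact hvals i (congrArg Fin.val he).symm
    exact ⟨d k, Set.mem_range_self k, (⟨fun he => hadj i₀ (by rw [he]), hadj⟩ : d k ≠ v ∧ ∀ i, d k i ≠ v i)⟩
  · have hinj : Function.Injective d := by
      intro a b hab
      have := congrArg (fun f => (f i₀).val) hab
      exact Fin.ext this
    have h1 : Set.range d = d '' Set.univ := by simp
    rw [h1, Set.ncard_image_of_injective _ hinj, Set.ncard_univ, Nat.card_eq_fintype_card,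
      Fintype.card_fin]

lemma lower_bound {t : ℕ} (ht : 3 ≤ t) (n : Fin t → ℕ) (hn : ∀ i, t + 1 ≤ n i)
    (D : Set (∀ i, Fin (n i))) (hD : (prodCompleteGraphs n).Dominating D) :
    t + 1 ≤ D.ncard := by
  classical
  by_contra hle
  push_neg at hle
  have hV : ∀ i, (0 : ℕ) < n i := fun i => by have := hn i; omega
  rcases D.eq_empty_or_nonempty with hDe | hDne
  · obtain ⟨u, hu, -⟩ := hD (fun i => ⟨0, hV i⟩)
    simp [hDe] at hu
  haveI : Fintype ↥D := (Set.toFinite D).fintype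
  have hcard : Fintype.card ↥D ≤ t := by
    have h1 : Fintype.card ↥D = D.ncard := by
      rw [← Nat.card_coe_set_eq, Nat.card_eq_fintype_card]
    omega
  obtain ⟨g⟩ : Nonempty (↥D ↪ Fin t) :=
    Function.Embedding.nonempty_of_card_le (by simpa using hcard)
  haveI : Nonempty ↥D := hDne.to_subtype
  set u : Fin t → ∀ i, Fin (n i) := fun j => (Function.invFun g j : ↥D) with hu
  have hcover : ∀ d ∈ D, ∃ j, u j = d := by
    intro d hd
    refine ⟨g ⟨d, hd⟩, ?_⟩
    simp only [hu, Function.leftInverse_invFun g.injective ⟨d, hd⟩]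
  set v₀ : ∀ i, Fin (n i) := fun i => u i i with hv₀
  by_cases hcase : ∃ j₀, v₀ = u j₀
  · obtain ⟨j₀, hj₀⟩ := hcase
    obtain ⟨c, hc⟩ := exists_avoid (lt_of_lt_of_le (Nat.lt_succ_self t) (hn j₀))
      (fun j => u j j₀)
    set v : ∀ i, Fin (n i) := Function.update v₀ j₀ c with hv
    obtain ⟨d, hdD, hdom⟩ := hD v
    obtain ⟨j, hj⟩ := hcover d hdD
    subst hj
    change u j = v ∨ (u j ≠ v ∧ ∀ i, u j i ≠ v i) at hdom
    rcases hdom with heq | ⟨hne, hadj⟩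
    · apply hc j
      rw [heq, hv, Function.update_self]
    · by_cases hjj : j = j₀
      · subst hjj
        have hex : ∃ i : Fin t, i ≠ j := by
          by_cases h0 : j = ⟨0, by omega⟩
          · exact ⟨⟨1, by omega⟩, by rw [h0]; intro h; exact absurd (congrArg Fin.val h) (by simp)⟩
          · exact ⟨⟨0, by omega⟩, fun h => h0 h.symm⟩
        obtain ⟨i, hij⟩ := hex
        apply hadj i
        have h1 : v i = v₀ i := Function.update_of_ne hij _ _
        rw [h1]
        exact (congrFun hj₀ i).symm
      · apply hadj j
        rw [hv, Function.update_of_ne hjj]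
  · push_neg at hcase
    obtain ⟨d, hdD, hdom⟩ := hD v₀
    obtain ⟨j, hj⟩ := hcover d hdD
    change d = v₀ ∨ (d ≠ v₀ ∧ ∀ i, d i ≠ v₀ i) at hdom
    rcases hdom with heq | ⟨hne, hadj⟩
    · exact hcase j (by rw [← heq, hj])
    · exact hadj j (by rw [← hj])

theorem stmt1 {t : ℕ} (ht : 3 ≤ t) (n : Fin t → ℕ) (hn : ∀ i, t + 1 ≤ n i) :
    (prodCompleteGraphs n).domNum = t + 1 ∧ (prodCompleteGraphs n).totalDomNum = t + 1 := by
  obtain ⟨D, hDtot, hDcard⟩ := upper_bound ht n hn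
  have hDdom : (prodCompleteGraphs n).Dominating D := by
    intro v
    obtain ⟨w, hwD, hwadj⟩ := hDtot v
    exact ⟨w, hwD, Or.inr hwadj⟩
  constructor
  · refine le_antisymm (Nat.sInf_le ⟨D, hDdom, hDcard⟩) (le_csInf ⟨t + 1, D, hDdom, hDcard⟩ ?_)
    rintro m ⟨E, hE, rfl⟩
    exact lower_bound ht n hn E hE
  · refine le_antisymm (Nat.sInf_le ⟨D, hDtot, hDcard⟩) (le_csInf ⟨t + 1, D, hDtot, hDcard⟩ ?_)
    rintro m ⟨E, hE, rfl⟩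
    refine lower_bound ht n hn E (fun v => ?_)
    obtain ⟨w, hwD, hwadj⟩ := hE v
    exact ⟨w, hwD, Or.inr hwadj⟩
end

section
/- Let G = K_{n_1} × ... × K_{n_t} with t ≥ 3 and n_i ≥ t+1 for all i. Then the paired domination number γ_pr(G) equals t+1 if t is odd and t+2 if t is even. -/
set_option linter.unusedVariables false
set_option linter.unnecessarySeqFocus false

open SimpleGraph

variable {V : Type*} {W : Type*}

lemma avoidLem {N : ℕ} {α : Type*} [Fintype α] (hk : Fintype.card α < N)
    (f : α → Fin N) : ∃ a : Fin N, ∀ j, f j ≠ a := by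
  by_contra h
  push_neg at h
  have := Fintype.card_le_of_surjective f (fun a => h a)
  simp at this
  omega

lemma pm_of_involution {V : Type*} (G : SimpleGraph V) {s : ℕ} (z : Fin s → V)
    (hz : Function.Injective z) (p : Fin s → Fin s) (hp : ∀ a, p (p a) = a)
    (hadj : ∀ a, G.Adj (z a) (z (p a))) :
    ∃ M : (G.induce (Set.range z)).Subgraph, M.IsPerfectMatching := by
  classical
  set D := Set.range z
  have idx : ∀ u : D, ∃ a, z a = (u : V) := fun u => u.2
  let σ : D → D := fun u => ⟨z (p (idx u).choose), Set.mem_range_self _⟩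
  have hσval : ∀ u : D, (σ u : V) = z (p (idx u).choose) := fun u => rfl
  have hidx : ∀ (u : D) (a : Fin s), z a = (u : V) → (idx u).choose = a := by
    intro u a ha
    exact hz (((idx u).choose_spec).trans ha.symm)
  have hinv : ∀ u : D, σ (σ u) = u := by
    intro u
    have h1 : (idx (σ u)).choose = p ((idx u).choose) :=
      hidx (σ u) _ (hσval u).symm
    apply Subtype.ext
    rw [hσval, h1, hp]
    exact (idx u).choose_spec
  have hadj' : ∀ u : D, (G.induce D).Adj u (σ u) := by
    intro u
    obtain ⟨a, ha⟩ := idx u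
    have h1 : (idx u).choose = a := hidx u a ha
    show G.Adj (u : V) ((σ u : D) : V)
    rw [hσval, h1, ← ha]
    exact hadj a
  refine ⟨⟨Set.univ, fun u v => v = σ u ∨ u = σ v, ?_, ?_, ?_⟩, ?_⟩
  · rintro u v (rfl | rfl)
    · exact hadj' u
    · exact (hadj' v).symm
  · intro u v _; trivial
  · constructor; intro u v h; tauto
  · rw [Subgraph.isPerfectMatching_iff]
    intro u
    refine ⟨σ u, Or.inl rfl, ?_⟩
    rintro w (rfl | rfl)
    · rfl
    · exact (hinv w).symm

lemma notDomLem {t : ℕ} (ht : 3 ≤ t) (n : Fin t → ℕ) (hn : ∀ i, t + 1 ≤ n i)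
    (d : Fin t → (∀ i, Fin (n i))) :
    ¬ (prodCompleteGraphs n).Dominating (Set.range d) := by
  classical
  intro hdom
  set v : ∀ i, Fin (n i) := fun i => d i i with hv
  by_cases hm : ∃ m, d m = v
  · obtain ⟨m, hm⟩ := hm
    obtain ⟨a, havoid⟩ := avoidLem
      (show Fintype.card (Fin t) < n m by simpa using hn m) (fun j => d j m)
    set w := Function.update v m a with hw
    have hwm : w m = a := Function.update_self m a v
    have hwi : ∀ i, i ≠ m → w i = d i i := fun i hi => Function.update_of_ne hi a v
    obtain ⟨u, hu, hcase⟩ := hdom w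
    obtain ⟨j, rfl⟩ := hu
    rcases hcase with heq | hadj
    · exact havoid j (by rw [← hwm, heq])
    · rcases eq_or_ne j m with heq' | hjm
      · obtain ⟨i, him⟩ : ∃ i : Fin t, i ≠ m := by
          have : 1 < Fintype.card (Fin t) := by simp; omega
          exact Fintype.exists_ne_of_one_lt_card this m
        exact (show _ ∧ _ from hadj).2 i (by rw [heq', hm, hwi i him])
      · exact (show _ ∧ _ from hadj).2 j (by rw [hwi j hjm])
  · obtain ⟨u, hu, hcase⟩ := hdom v
    obtain ⟨j, rfl⟩ := hu
    rcases hcase with heq | hadj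
    · exact hm ⟨j, heq⟩
    · exact (show _ ∧ _ from hadj).2 j rfl

lemma domLB {t : ℕ} (ht : 3 ≤ t) (n : Fin t → ℕ) (hn : ∀ i, t + 1 ≤ n i)
    (D : Set (∀ i, Fin (n i))) (hdom : (prodCompleteGraphs n).Dominating D) :
    t + 1 ≤ D.ncard := by
  classical
  by_contra hlt
  push_neg at hlt
  have hfin : D.Finite := Set.toFinite D
  obtain ⟨k, f, hf⟩ := hfin.fin_embedding
  have hk : k ≤ t := by
    have : (Set.range f).ncard = k := by
      rw [← Nat.card_coe_set_eq, Nat.card_range_of_injective f.injective]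
      simp
    rw [hf] at this
    omega
  have hD0 : D.Nonempty := by
    by_contra hne
    rw [Set.not_nonempty_iff_eq_empty] at hne
    obtain ⟨u, hu, -⟩ := hdom (fun i => ⟨0, by have := hn i; omega⟩)
    rw [hne] at hu
    exact hu
  have hk0 : 0 < k := by
    rcases Nat.eq_zero_or_pos k with rfl | h
    · exfalso
      obtain ⟨x, hx⟩ := hD0
      rw [← hf] at hx
      obtain ⟨j, -⟩ := hx
      exact j.elim0
    · exact h
  set d : Fin t → (∀ i, Fin (n i)) :=
    fun i => if h : i.val < k then f ⟨i.val, h⟩ else f ⟨0, hk0⟩ with hd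
  have hsub : D ⊆ Set.range d := by
    intro x hx
    rw [← hf] at hx
    obtain ⟨j, rfl⟩ := hx
    have hj : j.val < t := lt_of_lt_of_le j.isLt hk
    refine ⟨⟨j.val, hj⟩, ?_⟩
    simp only [hd, dif_pos j.isLt]
  exact notDomLem ht n hn d (fun x => by
    obtain ⟨u, hu, h⟩ := hdom x
    exact ⟨u, hsub hu, h⟩)

set_option maxHeartbeats 1600000 in
theorem stmt2 {t : ℕ} (ht : 3 ≤ t) (n : Fin t → ℕ) (hn : ∀ i, t + 1 ≤ n i) :
    (prodCompleteGraphs n).pairedDomNum = if Odd t then t + 1 else t + 2 := by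
  classical
  set G := prodCompleteGraphs n with hG
  have ht0 : 0 < t := by omega
  have i0 : Fin t := ⟨0, ht0⟩
  set x : Fin (t+1) → (∀ i, Fin (n i)) :=
    (fun k i => ⟨k.val, lt_of_lt_of_le k.isLt (hn i)⟩) with hx
  have hxval : ∀ k i, (x k i).val = k.val := fun k i => rfl
  have hxinj : Function.Injective x := by
    intro a b hab
    exact Fin.ext (by rw [← hxval a i0, ← hxval b i0, hab])
  have hxadj : ∀ a b : Fin (t+1), a ≠ b → G.Adj (x a) (x b) := by
    intro a b hab
    have hv : ∀ i, x a i ≠ x b i := by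
      intro i h
      exact hab (Fin.ext (by rw [← hxval a i, ← hxval b i, h]))
    exact show x a ≠ x b ∧ ∀ i, x a i ≠ x b i from ⟨fun h => hv i0 (congrFun h i0), hv⟩
  have hdomx : G.Dominating (Set.range x) := by
    intro v
    set f : Fin t → Fin (t+1) :=
      (fun i => if h : (v i).val < t+1 then ⟨(v i).val, h⟩ else ⟨0, by omega⟩) with hf
    obtain ⟨a, ha⟩ := avoidLem (by simp) f
    have hcoord : ∀ i, x a i ≠ v i := by
      intro i h
      have hval : a.val = (v i).val := by rw [← hxval a i, h]
      by_cases hlt : (v i).val < t + 1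
      · refine ha i ?_
        simp only [hf, dif_pos hlt]
        exact Fin.ext hval.symm
      · have := a.isLt
        omega
    refine ⟨x a, Set.mem_range_self a, Or.inr ?_⟩
    exact show x a ≠ v ∧ ∀ i, x a i ≠ v i from ⟨fun h => hcoord i0 (congrFun h i0), hcoord⟩
  have hLB : ∀ m ∈ {m | ∃ D, G.PairedDominating D ∧ D.ncard = m},
      t + 1 ≤ m ∧ Even m := by
    rintro m ⟨D, ⟨hDdom, M, hM⟩, rfl⟩
    constructor
    · exact domLB ht n hn D hDdom
    · have : Fintype D := (Set.toFinite D).fintype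
      have he := hM.even_card
      rwa [Set.ncard_eq_toFinset_card', Set.toFinset_card]
  rcases Nat.even_or_odd t with hte | hto
  · -- t even : answer t+2
    have hodd : ¬ Odd t := Nat.not_odd_iff_even.mpr hte
    have hteven : t % 2 = 0 := Nat.even_iff.mp hte
    rw [if_neg hodd]
    set y : ∀ i, Fin (n i) :=
      (fun i => if i.val = 1 then ⟨2, by have := hn i; omega⟩
        else ⟨1, by have := hn i; omega⟩) with hy
    have hy0 : (y ⟨0, ht0⟩).val = 1 := by simp [hy]
    have hy1 : (y ⟨1, by omega⟩).val = 2 := by simp [hy]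
    have hyval : ∀ i, (y i).val = 1 ∨ (y i).val = 2 := by
      intro i
      by_cases h : i.val = 1 <;> simp [hy, h]
    have hyx : ∀ k, y ≠ x k := by
      intro k h
      have h0 := congrArg Fin.val (congrFun h ⟨0, ht0⟩)
      have h1 := congrArg Fin.val (congrFun h ⟨1, by omega⟩)
      rw [hy0, hxval] at h0
      rw [hy1, hxval] at h1
      omega
    have hyadj : G.Adj (x ⟨0, by omega⟩) y := by
      have hv : ∀ i, x ⟨0, by omega⟩ i ≠ y i := by
        intro i h
        have h2 : (0 : ℕ) = ((y i) : ℕ) := congrArg Fin.val h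
        rcases hyval i with h' | h' <;> omega
      exact show x ⟨0, by omega⟩ ≠ y ∧ ∀ i, x ⟨0, by omega⟩ i ≠ y i from ⟨fun h => hv i0 (congrFun h i0), hv⟩
    set z : Fin (t+2) → (∀ i, Fin (n i)) :=
      (fun k => if h : k.val < t+1 then x ⟨k.val, h⟩ else y) with hz
    have hzx : ∀ (k : Fin (t+2)) (h : k.val < t+1), z k = x ⟨k.val, h⟩ := by
      intro k h; show (if h : k.val < t+1 then x ⟨k.val, h⟩ else y) = _; exact dif_pos h
    have hzy : ∀ (k : Fin (t+2)), k.val = t + 1 → z k = y := by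
      intro k h; simp [hz, h]
    have hzinj : Function.Injective z := by
      intro a b hab
      by_cases ha : a.val < t+1 <;> by_cases hb : b.val < t+1
      · rw [hzx a ha, hzx b hb] at hab
        have := hxinj hab
        exact Fin.ext (by simpa [Fin.ext_iff] using this)
      · rw [hzx a ha, hzy b (by have := b.isLt; omega)] at hab
        exact absurd hab.symm (hyx _)
      · rw [hzx b hb, hzy a (by have := a.isLt; omega)] at hab
        exact absurd hab (hyx _)
      · have := a.isLt; have := b.isLt
        exact Fin.ext (by omega)
    have hrange : Set.range x ⊆ Set.range z := by
      rintro u ⟨k, rfl⟩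
      exact ⟨⟨k.val, by have := k.isLt; omega⟩, hzx _ (by exact k.isLt)⟩
    have hdomz : G.Dominating (Set.range z) := by
      intro v
      obtain ⟨u, hu, h⟩ := hdomx v
      exact ⟨u, hrange hu, h⟩
    have pb : ∀ a, a < t + 2 → (if a = 0 then t+1 else if a = t+1 then 0
        else if a % 2 = 1 then a+1 else a-1) < t + 2 := by
      intro a ha; split_ifs <;> omega
    set p : Fin (t+2) → Fin (t+2) :=
      (fun k => ⟨if k.val = 0 then t+1 else if k.val = t+1 then 0
        else if k.val % 2 = 1 then k.val + 1 else k.val - 1, pb k.val k.isLt⟩) with hp0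
    have hpval : ∀ k : Fin (t+2), (p k).val =
        if k.val = 0 then t+1 else if k.val = t+1 then 0
        else if k.val % 2 = 1 then k.val + 1 else k.val - 1 := fun k => rfl
    have hpv : ∀ k : Fin (t+2), ((k:ℕ) = 0 ∧ ((p k):ℕ) = t+1) ∨
        ((k:ℕ) = t+1 ∧ ((p k):ℕ) = 0) ∨
        (1 ≤ (k:ℕ) ∧ (k:ℕ) ≤ t ∧ (k:ℕ) % 2 = 1 ∧ ((p k):ℕ) = (k:ℕ) + 1) ∨
        (1 ≤ (k:ℕ) ∧ (k:ℕ) ≤ t ∧ (k:ℕ) % 2 = 0 ∧ ((p k):ℕ) = (k:ℕ) - 1) := by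
      intro k
      rw [hpval]
      have hk := k.isLt
      split_ifs <;> omega
    have hp : ∀ k, p (p k) = k := by
      intro k
      apply Fin.ext
      rcases hpv k with ⟨h1, h2⟩ | ⟨h1, h2⟩ | ⟨h1, h2, h3, h4⟩ | ⟨h1, h2, h3, h4⟩ <;>
        rcases hpv (p k) with ⟨g1, g2⟩ | ⟨g1, g2⟩ | ⟨g1, g2, g3, g4⟩ | ⟨g1, g2, g3, g4⟩ <;>
        omega
    have hpne : ∀ k : Fin (t+2), (p k).val ≠ k.val := by
      intro k
      rcases hpv k with ⟨h1, h2⟩ | ⟨h1, h2⟩ | ⟨h1, h2, h3, h4⟩ | ⟨h1, h2, h3, h4⟩ <;> omega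
    have hadjp : ∀ k, G.Adj (z k) (z (p k)) := by
      intro k
      have hk := k.isLt
      rcases hpv k with ⟨h1, h2⟩ | ⟨h1, h2⟩ | ⟨h1, h2, h3, h4⟩ | ⟨h1, h2, h3, h4⟩
      · have hlt : (k:ℕ) < t + 1 := by omega
        have e0 : (⟨(k:ℕ), hlt⟩ : Fin (t+1)) = ⟨0, by omega⟩ := Fin.ext h1
        rw [hzx k hlt, e0, hzy (p k) h2]
        exact hyadj
      · have hlt : ((p k):ℕ) < t + 1 := by omega
        have e0 : (⟨((p k):ℕ), hlt⟩ : Fin (t+1)) = ⟨0, by omega⟩ := Fin.ext h2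
        rw [hzy k h1, hzx (p k) hlt, e0]
        exact hyadj.symm
      · rw [hzx k (by omega), hzx (p k) (by omega)]
        refine hxadj _ _ ?_
        intro h
        have h5 : (k:ℕ) = ((p k):ℕ) := by
          have := congrArg Fin.val h
          simpa [Fin.ext_iff] using this
        omega
      · rw [hzx k (by omega), hzx (p k) (by omega)]
        refine hxadj _ _ ?_
        intro h
        have h5 : (k:ℕ) = ((p k):ℕ) := by
          have := congrArg Fin.val h
          simpa [Fin.ext_iff] using this
        omega
    obtain ⟨M, hM⟩ := pm_of_involution G z hzinj p hp hadjp
    have hcard : (Set.range z).ncard = t + 2 := by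
      rw [← Nat.card_coe_set_eq, Nat.card_range_of_injective hzinj]
      simp
    apply le_antisymm
    · exact Nat.sInf_le ⟨Set.range z, ⟨hdomz, M, hM⟩, hcard⟩
    · refine le_csInf ⟨t + 2, Set.range z, ⟨hdomz, M, hM⟩, hcard⟩ ?_
      intro m hm
      obtain ⟨h1, h2⟩ := hLB m hm
      rw [Nat.even_iff] at h2
      omega
  · -- t odd : answer t+1
    rw [if_pos hto]
    have htodd : t % 2 = 1 := Nat.odd_iff.mp hto
    have pb : ∀ a, a < t + 1 → (if a % 2 = 0 then a + 1 else a - 1) < t + 1 := by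
      intro a ha; split_ifs <;> omega
    set p : Fin (t+1) → Fin (t+1) :=
      (fun k => ⟨if k.val % 2 = 0 then k.val + 1 else k.val - 1, pb k.val k.isLt⟩) with hp0
    have hpval : ∀ k : Fin (t+1), (p k).val =
        if k.val % 2 = 0 then k.val + 1 else k.val - 1 := fun k => rfl
    have hpv : ∀ k : Fin (t+1), ((k:ℕ) % 2 = 0 ∧ ((p k):ℕ) = (k:ℕ) + 1) ∨
        ((k:ℕ) % 2 = 1 ∧ ((p k):ℕ) = (k:ℕ) - 1) := by
      intro k
      rw [hpval]
      have hk := k.isLt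
      split_ifs <;> omega
    have hp : ∀ k, p (p k) = k := by
      intro k
      apply Fin.ext
      have hk := k.isLt
      rcases hpv k with ⟨h1, h2⟩ | ⟨h1, h2⟩ <;>
        rcases hpv (p k) with ⟨g1, g2⟩ | ⟨g1, g2⟩ <;> omega
    have hpne : ∀ k : Fin (t+1), (p k).val ≠ k.val := by
      intro k
      rcases hpv k with ⟨h1, h2⟩ | ⟨h1, h2⟩ <;> omega
    have hadjp : ∀ k, G.Adj (x k) (x (p k)) := by
      intro k
      refine hxadj _ _ ?_
      intro h
      exact hpne k (congrArg Fin.val h.symm)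
    obtain ⟨M, hM⟩ := pm_of_involution G x hxinj p hp hadjp
    have hcard : (Set.range x).ncard = t + 1 := by
      rw [← Nat.card_coe_set_eq, Nat.card_range_of_injective hxinj]
      simp
    apply le_antisymm
    · exact Nat.sInf_le ⟨Set.range x, ⟨hdomx, M, hM⟩, hcard⟩
    · refine le_csInf ⟨t + 1, Set.range x, ⟨hdomx, M, hM⟩, hcard⟩ ?_
      intro m hm
      exact (hLB m hm).1
end

section
/- Let G and H be connected graphs without isolated vertices, and let G' be obtained from G by adding a new vertex v' attached by a single edge to some vertex v of G. Then γ_pr(G' × H) ≤ 2(γ_pr(G × H) + γ_pr(H)). -/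
set_option linter.unusedVariables false
set_option linter.unnecessarySeqFocus false

open SimpleGraph

variable {V : Type*} {W : Type*}

-- helper lemma 1: involution gives perfect matching
lemma exists_pm_of_involution {α : Type*} (L : SimpleGraph α) (f : α → α)
    (hinv : Function.Involutive f) (hadj : ∀ x, L.Adj x (f x)) :
    ∃ M : L.Subgraph, M.IsPerfectMatching := by
  refine ⟨⟨Set.univ, fun x y => y = f x, ?_, ?_, ?_⟩, ?_, fun x => trivial⟩
  · rintro x y rfl; exact hadj x
  · intro x y _; trivial
  · constructor; rintro x y rfl; exact (hinv x).symm
  · intro x _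
    exact ⟨f x, rfl, fun y hy => hy⟩

-- helper lemma 2: perfect matching of induced subgraph gives involution
lemma involution_of_pm {α : Type*} (L : SimpleGraph α) (D : Set α)
    (h : ∃ M : (L.induce D).Subgraph, M.IsPerfectMatching) :
    ∃ f : D → D, Function.Involutive f ∧ ∀ x : D, L.Adj x.1 (f x).1 := by
  obtain ⟨M, hM⟩ := h
  rw [SimpleGraph.Subgraph.isPerfectMatching_iff] at hM
  choose f hf huniq using hM
  refine ⟨f, fun x => (huniq (f x) x (M.adj_symm (hf x))).symm, fun x => ?_⟩
  exact M.adj_sub (hf x)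

lemma finite_subgraph {α : Type*} [Finite α] (L : SimpleGraph α) : Finite L.Subgraph := by
  apply Finite.of_injective (fun M : L.Subgraph => (M.verts, M.Adj))
  intro M N h
  simp only [Prod.mk.injEq] at h
  exact SimpleGraph.Subgraph.ext h.1 h.2

lemma exists_pairedDominating {α : Type*} [Finite α] (L : SimpleGraph α)
    (h : L.NoIsolated) : ∃ D, L.PairedDominating D := by
  classical
  have : Finite L.Subgraph := finite_subgraph L
  obtain ⟨M, hMmem, hMmax⟩ := Set.Finite.exists_maximalFor id
    {M : L.Subgraph | M.IsMatching} (Set.toFinite _) ⟨⊥, fun v hv => absurd hv (by simp)⟩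
  simp only [Set.mem_setOf_eq, id] at hMmem hMmax
  refine ⟨M.verts, ⟨?_, ?_⟩⟩
  · -- dominating
    intro x
    by_cases hx : x ∈ M.verts
    · exact ⟨x, hx, Or.inl rfl⟩
    · obtain ⟨y, hy⟩ := h x
      by_cases hy2 : y ∈ M.verts
      · exact ⟨y, hy2, Or.inr hy⟩
      · exfalso
        have hd : Disjoint M.support (L.subgraphOfAdj hy).support := by
          rw [Set.disjoint_right]
          intro z hz
          have : z ∈ ({y, x} : Set α) := by
            have := (L.subgraphOfAdj hy).support_subset_verts hz
            simpa using this
          intro hzM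
          have hzM' := M.support_subset_verts hzM
          rcases this with rfl | rfl
          · exact hy2 hzM'
          · exact hx hzM'
        have hsup : (M ⊔ L.subgraphOfAdj hy).IsMatching :=
          hMmem.sup (SimpleGraph.Subgraph.IsMatching.subgraphOfAdj hy) hd
        have heq := le_antisymm le_sup_left (hMmax hsup le_sup_left)
        have : x ∈ M.verts := by
          rw [heq]; simp
        exact hx this
  · -- perfect matching on induced
    refine ⟨⟨Set.univ, fun a b => M.Adj a.1 b.1, ?_, ?_, ?_⟩, ?_, fun x => trivial⟩
    · intro a b hab; exact M.adj_sub hab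
    · intro a b _; trivial
    · constructor; intro a b hab; exact M.adj_symm hab
    · rintro ⟨x, hx⟩ -
      obtain ⟨w, hw, hwu⟩ := hMmem hx
      exact ⟨⟨w, M.edge_vert (M.adj_symm hw)⟩, hw, fun ⟨y, hy⟩ hadj => Subtype.ext (hwu y hadj)⟩

/-- auxiliary involution used to pair up the dominating set of the pendant product. -/
def pairF {V W : Type*} (D : Set (V × W)) (v : V) (g : D → D) (pF : W → W)
    [DecidablePred (· ∈ D)] : Option V × W → Option V × W
  | (some a, w) => if h : (a, w) ∈ D then (some (g ⟨(a, w), h⟩).1.1, (g ⟨(a, w), h⟩).1.2)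
      else (none, pF w)
  | (none, w) => (some v, pF w)

theorem stmt3 {V W : Type*} [Fintype V] [Fintype W] (G : SimpleGraph V) (H : SimpleGraph W)
    (hGc : G.Connected) (hHc : H.Connected) (hG : G.NoIsolated) (hH : H.NoIsolated) (v : V) :
    ((addPendant G v).tensor H).pairedDomNum ≤
      2 * ((G.tensor H).pairedDomNum + H.pairedDomNum) := by
  classical
  -- no isolated vertices in the products
  have hGH : (G.tensor H).NoIsolated := by
    rintro ⟨a, w⟩
    obtain ⟨b, hb⟩ := hG a
    obtain ⟨u, hu⟩ := hH w
    exact ⟨(b, u), And.intro hb hu⟩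
  -- extract minimum paired dominating sets
  obtain ⟨D, hD, hDcard⟩ : ∃ D, (G.tensor H).PairedDominating D ∧
      D.ncard = (G.tensor H).pairedDomNum := by
    have hne : {n | ∃ D : Set (V × W), (G.tensor H).PairedDominating D ∧ D.ncard = n}.Nonempty := by
      obtain ⟨D, hD⟩ := exists_pairedDominating (G.tensor H) hGH
      exact ⟨D.ncard, D, hD, rfl⟩
    exact Nat.sInf_mem hne
  obtain ⟨E, hE, hEcard⟩ : ∃ E, H.PairedDominating E ∧ E.ncard = H.pairedDomNum := by
    have hne : {n | ∃ D : Set W, H.PairedDominating D ∧ D.ncard = n}.Nonempty := by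
      obtain ⟨D, hD⟩ := exists_pairedDominating H hH
      exact ⟨D.ncard, D, hD, rfl⟩
    exact Nat.sInf_mem hne
  -- involutions from the matchings
  obtain ⟨g, hg_inv, hg_adj⟩ := involution_of_pm (G.tensor H) D hD.2
  obtain ⟨p, hp_inv, hp_adj⟩ := involution_of_pm H E hE.2
  -- extend p to a function on all of W
  set pF : W → W := fun e => if h : e ∈ E then (p ⟨e, h⟩).1 else e with hpF_def
  have hpF_mem : ∀ e ∈ E, pF e ∈ E := by
    intro e he; simp only [hpF_def, dif_pos he]; exact (p ⟨e, he⟩).2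
  have hpF_adj : ∀ e ∈ E, H.Adj e (pF e) := by
    intro e he; simp only [hpF_def, dif_pos he]; exact hp_adj ⟨e, he⟩
  have hpF_inv : ∀ e ∈ E, pF (pF e) = e := by
    intro e he
    have h1 : pF e = (p ⟨e, he⟩).1 := by simp only [hpF_def, dif_pos he]
    have h2 : pF e ∈ E := hpF_mem e he
    rw [show pF (pF e) = (p ⟨pF e, h2⟩).1 from dif_pos h2]
    have : (⟨pF e, h2⟩ : E) = p ⟨e, he⟩ := Subtype.ext h1
    rw [this]
    exact congrArg Subtype.val (hp_inv ⟨e, he⟩)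
  -- E is a total dominating set of H
  have hEtot : ∀ w, ∃ e ∈ E, H.Adj e w := by
    intro w
    obtain ⟨e, he, heq⟩ := hE.1 w
    rcases heq with rfl | hadj
    · exact ⟨pF e, hpF_mem e he, (hpF_adj e he).symm⟩
    · exact ⟨e, he, hadj⟩
  -- the candidate set
  set L' := (addPendant G v).tensor H with hL'
  set E' : Set W := {e | e ∈ E ∧ (v, e) ∉ D} with hE'
  set A : Set (Option V × W) := (fun d : V × W => ((some d.1 : Option V), d.2)) '' D with hA
  set B : Set (Option V × W) := (fun e : W => ((some v : Option V), e)) '' E' with hB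
  set C : Set (Option V × W) := (fun e : W => ((none : Option V), pF e)) '' E' with hC
  set S : Set (Option V × W) := A ∪ B ∪ C with hS
  -- membership helpers
  have hmemA : ∀ d ∈ D, ((some d.1 : Option V), d.2) ∈ S := fun d hd =>
    Or.inl (Or.inl ⟨d, hd, rfl⟩)
  have hmemB : ∀ e ∈ E', ((some v : Option V), e) ∈ S := fun e he =>
    Or.inl (Or.inr ⟨e, he, rfl⟩)
  have hmemC : ∀ e ∈ E', ((none : Option V), pF e) ∈ S := fun e he =>
    Or.inr ⟨e, he, rfl⟩
  have hmemVE : ∀ e ∈ E, ((some v : Option V), e) ∈ S := by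
    intro e he
    by_cases hve : (v, e) ∈ D
    · exact hmemA (v, e) hve
    · exact hmemB e ⟨he, hve⟩
  -- S is dominating
  have hSdom : L'.Dominating S := by
    rintro ⟨(_ | a), w⟩
    · -- pendant-side vertices use the copy of E at v and none
      obtain ⟨e, he, hadj⟩ := hEtot w
      refine ⟨(some v, e), hmemVE e he, Or.inr ?_⟩
      exact And.intro rfl hadj
    · obtain ⟨⟨u1, u2⟩, hu, hcase⟩ := hD.1 (a, w)
      refine ⟨(some u1, u2), hmemA (u1, u2) hu, ?_⟩
      rcases hcase with heq | hadj
      · left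
        rw [Prod.ext_iff] at heq
        exact Prod.ext (congrArg some heq.1) heq.2
      · exact Or.inr (And.intro hadj.1 hadj.2)
  -- the involution
  set F : Option V × W → Option V × W := pairF D v g pF with hFdef
  have hF1 : ∀ (a : V) (w : W) (h : (a, w) ∈ D),
      F (some a, w) = (some (g ⟨(a, w), h⟩).1.1, (g ⟨(a, w), h⟩).1.2) := by
    intro a w h; simp [hFdef, pairF, h]
  have hF2 : ∀ (a : V) (w : W), (a, w) ∉ D → F (some a, w) = (none, pF w) := by
    intro a w h; simp [hFdef, pairF, h]
  have hF3 : ∀ w : W, F (none, w) = (some v, pF w) := by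
    intro w; simp [hFdef, pairF]
  -- F maps S to S
  have hFS : ∀ x ∈ S, F x ∈ S := by
    rintro x ((⟨d, hd, rfl⟩ | ⟨e, he, rfl⟩) | ⟨e, he, rfl⟩)
    · rw [hF1 d.1 d.2 hd]
      exact hmemA _ (g ⟨(d.1, d.2), hd⟩).2
    · rw [hF2 v e he.2]
      exact hmemC e he
    · rw [hF3]
      rw [hpF_inv e he.1]
      exact hmemB e he
  -- F is an involution on S
  have hFinv : ∀ x ∈ S, F (F x) = x := by
    rintro x ((⟨d, hd, rfl⟩ | ⟨e, he, rfl⟩) | ⟨e, he, rfl⟩)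
    · rw [hF1 d.1 d.2 hd]
      have hd2 := (g ⟨(d.1, d.2), hd⟩).2
      rw [hF1 _ _ hd2]
      have hkey : (⟨((g ⟨(d.1, d.2), hd⟩).1.1, (g ⟨(d.1, d.2), hd⟩).1.2), hd2⟩ : D)
          = g ⟨(d.1, d.2), hd⟩ := Subtype.ext rfl
      rw [hkey, hg_inv]
    · rw [hF2 v e he.2, hF3, hpF_inv e he.1]
    · rw [hF3, hpF_inv e he.1, hF2 v e he.2]
  -- F x is adjacent to x for x ∈ S
  have hFadj : ∀ x ∈ S, L'.Adj x (F x) := by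
    rintro x ((⟨d, hd, rfl⟩ | ⟨e, he, rfl⟩) | ⟨e, he, rfl⟩)
    · rw [hF1 d.1 d.2 hd]
      have := hg_adj ⟨(d.1, d.2), hd⟩
      exact And.intro this.1 this.2
    · rw [hF2 v e he.2]
      exact And.intro rfl (hpF_adj e he.1)
    · rw [hF3, hpF_inv e he.1]
      exact And.intro rfl (hpF_adj e he.1).symm
  -- perfect matching of the induced graph on S
  have hSpm : ∃ M : (L'.induce S).Subgraph, M.IsPerfectMatching := by
    refine exists_pm_of_involution (L'.induce S) (fun x => ⟨F x.1, hFS x.1 x.2⟩) ?_ ?_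
    · intro x
      exact Subtype.ext (hFinv x.1 x.2)
    · intro x
      exact hFadj x.1 x.2
  -- cardinality bound
  have hcard : S.ncard ≤ D.ncard + 2 * E.ncard := by
    have h1 : S.ncard ≤ (A ∪ B).ncard + C.ncard := Set.ncard_union_le _ _
    have h2 : (A ∪ B).ncard ≤ A.ncard + B.ncard := Set.ncard_union_le _ _
    have hA' : A.ncard ≤ D.ncard := Set.ncard_image_le (Set.toFinite D)
    have hE'E : E'.ncard ≤ E.ncard :=
      Set.ncard_le_ncard (fun e he => he.1) (Set.toFinite E)
    have hB' : B.ncard ≤ E.ncard := le_trans (Set.ncard_image_le (Set.toFinite E')) hE'E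
    have hC' : C.ncard ≤ E.ncard := le_trans (Set.ncard_image_le (Set.toFinite E')) hE'E
    omega
  -- conclude
  have hfin : L'.pairedDomNum ≤ S.ncard :=
    Nat.sInf_le ⟨S, ⟨hSdom, hSpm⟩, rfl⟩
  have := hDcard
  have := hEcard
  omega
end

section
/- For any graph G without isolated vertices, the paired domination number satisfies γ_pr(G) ≥ 2ρ_3(G), where ρ_3(G) is the 3-packing number. -/
set_option linter.unusedVariables false
set_option linter.unnecessarySeqFocus false

open SimpleGraph

variable {V : Type*} {W : Type*}

section MyAux

variable {α : Type*}

lemma myWalkOf {G : SimpleGraph α} {a p : α} (h : a = p ∨ G.Adj a p) :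
    ∃ w : G.Walk a p, w.length ≤ 1 := by
  rcases h with rfl | h
  · exact ⟨.nil, by simp⟩
  · exact ⟨h.toWalk, by simp⟩

lemma myDist3 {G : SimpleGraph α} {p q a b : α} (h1 : a = p ∨ G.Adj a p)
    (h2 : b = q ∨ G.Adj b q) (h3 : a = b ∨ G.Adj a b) :
    G.Reachable p q ∧ G.dist p q ≤ 3 := by
  obtain ⟨w1, hw1⟩ := myWalkOf h1
  obtain ⟨w3, hw3⟩ := myWalkOf h3
  obtain ⟨w2, hw2⟩ := myWalkOf h2
  let w : G.Walk p q := w1.reverse.append (w3.append w2)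
  refine ⟨⟨w⟩, le_trans (G.dist_le w) ?_⟩
  simp only [w, SimpleGraph.Walk.length_append, SimpleGraph.Walk.length_reverse]
  omega

lemma myInvPM (H : SimpleGraph α) (f : α → α) (hinv : ∀ x, f (f x) = x)
    (hadj : ∀ x, H.Adj x (f x)) : ∃ M : H.Subgraph, M.IsPerfectMatching := by
  refine ⟨⟨Set.univ, fun a b => f a = b ∨ f b = a, ?_, fun _ => Set.mem_univ _, ?_⟩,
    ?_, fun v => Set.mem_univ _⟩
  · rintro a b (rfl | rfl)
    · exact hadj a
    · exact (hadj b).symm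
  · constructor
    rintro a b (rfl | h)
    · exact Or.inl (hinv a)
    · exact Or.inl h
  · intro v _
    refine ⟨f v, Or.inl rfl, ?_⟩
    rintro y (rfl | rfl)
    · rfl
    · exact (hinv y).symm

lemma myPMInv {H : SimpleGraph α} {M : H.Subgraph} (hM : M.IsPerfectMatching) :
    ∃ f : α → α, (∀ x, f (f x) = x) ∧ ∀ x, H.Adj x (f x) := by
  choose f hf huniq using fun v : α => hM.1 (hM.2 v)
  refine ⟨f, fun x => ?_, fun x => (hf x).adj_sub⟩
  exact (huniq (f x) x (hf x).symm).symm

end MyAux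

lemma myExistsPaired {V : Type*} [Fintype V] (G : SimpleGraph V) (hG : G.NoIsolated) :
    ∃ D : Set V, G.PairedDominating D := by
  classical
  set Good : Finset V → Prop := fun s =>
    ∃ f : (↑s : Set V) → (↑s : Set V), (∀ x, f (f x) = x) ∧ ∀ x, G.Adj x.1 (f x).1 with hGood
  have hfin : {s : Finset V | Good s}.Finite := Set.toFinite _
  have hne : {s : Finset V | Good s}.Nonempty := by
    refine ⟨∅, fun x => absurd x.2 (by simp), fun x => absurd x.2 (by simp), fun x => absurd x.2 (by simp)⟩
  obtain ⟨s, hs, hmax⟩ := Set.Finite.exists_maximalFor Finset.card _ hfin hne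
  obtain ⟨f, hinv, hadj⟩ := hs
  have hdom : G.Dominating (↑s : Set V) := by
    intro v
    by_contra hcon
    push_neg at hcon
    obtain ⟨u, hu⟩ := hG v
    have hvs : v ∉ s := fun h => (hcon v h).1 rfl
    have hus : u ∉ s := fun h => (hcon u h).2 hu
    have huv : u ≠ v := fun h => G.irrefl (h ▸ hu)
    set s' : Finset V := insert u (insert v s) with hs'
    have hsub : ∀ x ∈ s, x ∈ s' := fun x hx => by simp [s', hx]
    have hgood' : Good s' := by
      have hvmem : v ∈ (↑s' : Set V) := by simp [s']
      have humem : u ∈ (↑s' : Set V) := by simp [s']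
      set F : (↑s' : Set V) → (↑s' : Set V) := fun x =>
        if hx : x.1 ∈ s then ⟨(f ⟨x.1, hx⟩).1, hsub _ (f ⟨x.1, hx⟩).2⟩
        else if x.1 = u then ⟨v, hvmem⟩ else ⟨u, humem⟩ with hF
      have hFs : ∀ (x : (↑s' : Set V)) (hx : x.1 ∈ s), (F x).1 = (f ⟨x.1, hx⟩).1 := by
        intro x hx; simp [hF, hx]
      have hFu : ∀ (x : (↑s' : Set V)), x.1 ∉ s → x.1 = u → (F x).1 = v := by
        intro x hx h; rw [h] at hx; simp [hF, h, hx]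
      have hFv : ∀ (x : (↑s' : Set V)), x.1 ∉ s → x.1 ≠ u → (F x).1 = u := by
        intro x hx h; simp [hF, hx, h]
      have hdich : ∀ x : (↑s' : Set V), x.1 ∉ s → x.1 ≠ u → x.1 = v := by
        intro x hx h
        have := x.2
        simp only [s', Finset.coe_insert, Set.mem_insert_iff, Finset.mem_coe] at this
        tauto
      refine ⟨F, fun x => Subtype.ext ?_, fun x => ?_⟩
      · by_cases hx : x.1 ∈ s
        · have e1 : (F x).1 ∈ s := by rw [hFs x hx]; exact (f ⟨x.1, hx⟩).2
          rw [hFs (F x) e1]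
          have e2 : (⟨(F x).1, e1⟩ : (↑s : Set V)) = f ⟨x.1, hx⟩ := Subtype.ext (hFs x hx)
          rw [e2, hinv]
        · by_cases hxu : x.1 = u
          · have h1 := hFu x hx hxu
            have h2 : (F x).1 ∉ s := by rw [h1]; exact hvs
            have h3 : (F x).1 ≠ u := by rw [h1]; exact huv.symm
            rw [hFv (F x) h2 h3, hxu]
          · have hxv := hdich x hx hxu
            have h1 := hFv x hx hxu
            have h2 : (F x).1 ∉ s := by rw [h1]; exact hus
            rw [hFu (F x) h2 h1, hxv]
      · by_cases hx : x.1 ∈ s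
        · rw [hFs x hx]; exact hadj ⟨x.1, hx⟩
        · by_cases hxu : x.1 = u
          · rw [hFu x hx hxu, hxu]; exact hu
          · rw [hFv x hx hxu, hdich x hx hxu]; exact hu.symm
    have hcard : s'.card = s.card + 2 := by
      rw [hs', Finset.card_insert_of_notMem (by simp [hus, huv]),
        Finset.card_insert_of_notMem hvs]
    have := hmax (j := s') hgood' (by omega)
    omega
  refine ⟨(↑s : Set V), hdom, ?_⟩
  obtain ⟨M, hM⟩ := myInvPM (G.induce (↑s : Set V)) f hinv (fun x => hadj x)
  exact ⟨M, hM⟩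


theorem stmt5 {V : Type*} [Fintype V] (G : SimpleGraph V) (hG : G.NoIsolated) :
    2 * G.packNum3 ≤ G.pairedDomNum := by
  classical
  obtain ⟨D₀, hD₀⟩ := myExistsPaired G hG
  rw [SimpleGraph.pairedDomNum]
  refine le_csInf ⟨D₀.ncard, D₀, hD₀, rfl⟩ ?_
  rintro n ⟨D, ⟨hdom, M, hM⟩, rfl⟩
  have hTne : {n | ∃ P : Set V, G.Packing3 P ∧ P.ncard = n}.Nonempty :=
    ⟨0, ∅, by simp [SimpleGraph.Packing3], by simp⟩
  have hTbdd : BddAbove {n | ∃ P : Set V, G.Packing3 P ∧ P.ncard = n} := by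
    refine ⟨Fintype.card V, ?_⟩
    rintro n ⟨P, _, rfl⟩
    calc P.ncard ≤ Set.univ.ncard := Set.ncard_le_ncard (Set.subset_univ P) Set.finite_univ
    _ = Fintype.card V := by rw [Set.ncard_univ, Nat.card_eq_fintype_card]
  obtain ⟨P, hP, hPcard⟩ := Nat.sSup_mem hTne hTbdd
  rw [SimpleGraph.packNum3, ← hPcard]
  obtain ⟨f, hinv, hadj⟩ := myPMInv hM
  have hfinj : Function.Injective f := fun a b h => by rw [← hinv a, h, hinv]
  choose dom hdomD hdomP using hdom
  have key : ∀ p q : ↑P, (dom (p : V) = dom (q : V) ∨ G.Adj (dom (p : V)) (dom (q : V))) →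
      (p : V) = (q : V) := by
    intro p q h3
    by_contra hne
    obtain ⟨hr, hd⟩ := myDist3 (hdomP p) (hdomP q) h3
    rcases hP p.2 q.2 hne with h | h
    · exact h hr
    · omega
  set φ : ↑P × Bool → ↥D := fun x =>
    if x.2 then (⟨dom x.1, hdomD x.1⟩ : ↥D) else f ⟨dom x.1, hdomD x.1⟩ with hφ
  have hadj' : ∀ (d : ↥D), G.Adj d.1 (f d).1 := fun d => hadj d
  have hinj : Function.Injective φ := by
    rintro ⟨p, bp⟩ ⟨q, bq⟩ h
    cases bp <;> cases bq <;>
      simp only [hφ, if_true, if_false, Bool.true_eq_false, Bool.false_eq_true] at h ⊢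
    · -- false false
      have h' : dom (p : V) = dom (q : V) := congrArg Subtype.val (hfinj h)
      simp only [Prod.mk.injEq]
      exact ⟨Subtype.ext (key p q (Or.inl h')), trivial⟩
    · -- false true : ⟨dom q⟩ = f ⟨dom p⟩ reversed? h : f ⟨dom p,_⟩ = ⟨dom q,_⟩
      exfalso
      have hA : G.Adj (dom (p : V)) (dom (q : V)) := by
        have := hadj' ⟨dom (p : V), hdomD p⟩
        rw [h] at this
        exact this
      have hpq := key p q (Or.inr hA)
      rw [hpq] at hA
      exact G.irrefl hA
    · -- true false : h : ⟨dom p⟩ = f ⟨dom q⟩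
      exfalso
      have hA : G.Adj (dom (q : V)) (dom (p : V)) := by
        have := hadj' ⟨dom (q : V), hdomD q⟩
        rw [← h] at this
        exact this
      have hpq := key p q (Or.inr hA.symm)
      rw [hpq] at hA
      exact G.irrefl hA
    · -- true true
      have h' : dom (p : V) = dom (q : V) := congrArg Subtype.val h
      simp only [Prod.mk.injEq]
      exact ⟨Subtype.ext (key p q (Or.inl h')), trivial⟩
  have hcard := Nat.card_le_card_of_injective φ hinj
  have h1 : Nat.card (↑P × Bool) = 2 * P.ncard := by
    rw [Nat.card_prod, ← Nat.card_coe_set_eq]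
    simp [Nat.card_eq_fintype_card, mul_comm]
  have h2 : Nat.card ↥D = D.ncard := Nat.card_coe_set_eq D
  omega
end

section
/- For any graphs G and H, ρ_3(G × H) ≥ ρ_3(G)·ρ_3(H): the 3-packing number of the direct product is at least the product of the 3-packing numbers. -/
set_option linter.unusedVariables false
set_option linter.unnecessarySeqFocus false

open SimpleGraph

variable {V : Type*} {W : Type*}

private lemma pack_bdd {V : Type*} [Fintype V] (G : SimpleGraph V) :
    BddAbove {n | ∃ P : Set V, G.Packing3 P ∧ P.ncard = n} := by
  refine ⟨Fintype.card V, ?_⟩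
  rintro n ⟨P, -, rfl⟩
  simpa [Set.ncard_univ] using Set.ncard_le_ncard (Set.subset_univ P) Set.finite_univ

private lemma pack_exists {V : Type*} [Fintype V] (G : SimpleGraph V) :
    ∃ P : Set V, G.Packing3 P ∧ P.ncard = G.packNum3 := by
  have h0 : (0:ℕ) ∈ {n | ∃ P : Set V, G.Packing3 P ∧ P.ncard = n} :=
    ⟨∅, by simp [SimpleGraph.Packing3], by simp⟩
  exact Nat.sSup_mem ⟨0, h0⟩ (pack_bdd G)

theorem stmt6 {V W : Type*} [Fintype V] [Fintype W] (G : SimpleGraph V) (H : SimpleGraph W) :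
    G.packNum3 * H.packNum3 ≤ (G.tensor H).packNum3 := by
  obtain ⟨P, hP, hPc⟩ := pack_exists G
  obtain ⟨Q, hQ, hQc⟩ := pack_exists H
  have hpack : (G.tensor H).Packing3 (P ×ˢ Q) := by
    rintro ⟨u1, u2⟩ ⟨hu1, hu2⟩ ⟨v1, v2⟩ ⟨hv1, hv2⟩ hne
    by_contra hcon
    push_neg at hcon
    obtain ⟨hreach, hdist⟩ := hcon
    obtain ⟨w, hw⟩ := hreach.exists_walk_length_eq_dist
    have hwlen : w.length ≤ 3 := hw.le.trans hdist
    by_cases h1 : u1 = v1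
    · have h2 : u2 ≠ v2 := by
        intro h2; apply hne; simp [h1, h2]
      let f : (G.tensor H) →g H := ⟨Prod.snd, fun h => And.right h⟩
      have hr : H.Reachable u2 v2 := ⟨w.map f⟩
      have hd : H.dist u2 v2 ≤ 3 :=
        le_trans (SimpleGraph.dist_le (w.map f)) (by simpa using hwlen)
      rcases hQ hu2 hv2 h2 with h | h
      · exact h hr
      · exact absurd hd (not_le.mpr h)
    · let f : (G.tensor H) →g G := ⟨Prod.fst, fun h => And.left h⟩
      have hr : G.Reachable u1 v1 := ⟨w.map f⟩
      have hd : G.dist u1 v1 ≤ 3 :=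
        le_trans (SimpleGraph.dist_le (w.map f)) (by simpa using hwlen)
      rcases hP hu1 hv1 h1 with h | h
      · exact h hr
      · exact absurd hd (not_le.mpr h)
  have hcard : (P ×ˢ Q).ncard = P.ncard * Q.ncard := by
    rw [← Nat.card_coe_set_eq, ← Nat.card_coe_set_eq, ← Nat.card_coe_set_eq,
      ← Nat.card_prod]
    exact Nat.card_congr (Equiv.Set.prod P Q)
  rw [← hPc, ← hQc, ← hcard]
  exact le_csSup (pack_bdd (G.tensor H)) ⟨P ×ˢ Q, hpack, rfl⟩
end

section
/- If G and H are graphs without isolated vertices satisfying γ_pr(G) = 2ρ_3(G) and γ_pr(H) = 2ρ_3(H), then γ_pr(G × H) ≥ (1/2)·γ_pr(G)·γ_pr(H). -/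
set_option linter.unusedVariables false
set_option linter.unnecessarySeqFocus false

open SimpleGraph

variable {V : Type*} {W : Type*}

-- key counting lemma: 2 * |P| ≤ |D|
lemma key_count [Fintype V] (G : SimpleGraph V) {D P : Set V}
    (hD : G.PairedDominating D) (hP : G.Packing3 P) : 2 * P.ncard ≤ D.ncard := by
  classical
  obtain ⟨hdom, M, hmatch, hspan⟩ := hD
  choose u hu hu' using hdom
  -- partner function
  have hm0 : ∀ a : D, ∃ w : D, M.Adj a w := fun a => (hmatch (hspan a)).exists
  choose m hm using hm0
  have muniq : ∀ (a w : D), M.Adj a w → w = m a := by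
    intro a w hw
    obtain ⟨w', -, hw'⟩ := hmatch (hspan a)
    exact (hw' w hw).trans (hw' (m a) (hm a)).symm
  have minv : ∀ a : D, m (m a) = a := fun a => (muniq (m a) a (M.adj_symm (hm a))).symm
  have mne : ∀ a : D, m a ≠ a := fun a h => (G.induce D).irrefl (h ▸ M.adj_sub (hm a))
  have mAdjG : ∀ a : D, G.Adj ↑a ↑(m a) := fun a => M.adj_sub (hm a)
  -- walks of length ≤ 1 from u v to v
  have walkup : ∀ v, ∃ w : G.Walk (u v) v, w.length ≤ 1 := by
    intro v
    rcases hu' v with h | h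
    · exact ⟨SimpleGraph.Walk.nil.copy rfl h, by simp⟩
    · exact ⟨h.toWalk, by simp⟩
  choose wk hwk using walkup
  have key : ∀ p ∈ P, ∀ q ∈ P, ∀ w : G.Walk p q, w.length ≤ 3 → p = q := by
    intro p hp q hq w hw
    by_contra hne
    rcases hP hp hq hne with h | h
    · exact h ⟨w⟩
    · have := SimpleGraph.dist_le w
      omega
  set U : P → D := fun p => ⟨u ↑p, hu ↑p⟩ with hU
  have claim1 : ∀ p q : P, (U p : V) = (U q : V) → p = q := by
    intro p q h
    refine Subtype.ext (key ↑p p.2 ↑q q.2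
      (((wk ↑p).reverse.copy rfl h).append (wk ↑q)) ?_)
    have h1 := hwk ↑p
    have h2 := hwk ↑q
    simp [SimpleGraph.Walk.length_append, SimpleGraph.Walk.length_copy,
      SimpleGraph.Walk.length_reverse]
    omega
  have claim2 : ∀ p q : P, U p = m (U q) → p = q := by
    intro p q h
    have hadj : G.Adj (u ↑p) (u ↑q) := by
      have := mAdjG (U q)
      rw [← h] at this
      exact this.symm
    refine Subtype.ext (key ↑p p.2 ↑q q.2
      ((wk ↑p).reverse.append (SimpleGraph.Walk.cons hadj (wk ↑q))) ?_)
    have h1 := hwk ↑p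
    have h2 := hwk ↑q
    simp [SimpleGraph.Walk.length_append, SimpleGraph.Walk.length_reverse]
    omega
  set F : P × Bool → D := fun x => if x.2 then m (U x.1) else U x.1 with hF
  have Finj : Function.Injective F := by
    rintro ⟨p, bp⟩ ⟨q, bq⟩ h
    cases bp <;> cases bq <;> simp [hF] at h
    · exact by rw [claim1 p q (congrArg Subtype.val h)]
    · have hpq := claim2 p q h
      subst hpq
      exact absurd h.symm (mne (U p))
    · have hpq := claim2 q p h.symm
      subst hpq
      first
      | exact absurd h (mne _)
      | exact absurd h.symm (mne _)
    · have : U p = U q := by rw [← minv (U p), ← minv (U q), h]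
      rw [claim1 p q (congrArg Subtype.val this)]
  calc 2 * P.ncard = Nat.card (P × Bool) := by
        rw [Nat.card_prod, ← Nat.card_coe_set_eq]
        simp [mul_comm]
    _ ≤ Nat.card D := Nat.card_le_card_of_injective F Finj
    _ = D.ncard := Nat.card_coe_set_eq D

lemma exists_paired [Fintype V] (G : SimpleGraph V) (h : G.NoIsolated) :
    ∃ D : Set V, G.PairedDominating D := by
  classical
  set S : Set ℕ := {n | ∃ M : G.Subgraph, M.IsMatching ∧ M.verts.ncard = n} with hS
  have hne : S.Nonempty := ⟨0, ⊥, fun v hv => absurd hv (by simp), by simp⟩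
  have hbdd : BddAbove S := by
    refine ⟨Fintype.card V, ?_⟩
    rintro n ⟨M, -, rfl⟩
    calc M.verts.ncard ≤ (Set.univ : Set V).ncard :=
          Set.ncard_le_ncard (Set.subset_univ _) Set.finite_univ
      _ = Fintype.card V := by simp [Set.ncard_univ]
  obtain ⟨M, hmatch, hcard⟩ := Nat.sSup_mem hne hbdd
  refine ⟨M.verts, ?_, ?_⟩
  · intro v
    by_cases hv : v ∈ M.verts
    · exact ⟨v, hv, Or.inl rfl⟩
    · by_contra hcon
      push_neg at hcon
      obtain ⟨w, hw⟩ := h v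
      have hwv : w ∉ M.verts := fun hmem => (hcon w hmem).2 hw
      have hd : Disjoint M.support (G.subgraphOfAdj hw).support := by
        rw [hmatch.support_eq_verts, SimpleGraph.support_subgraphOfAdj]
        rw [Set.disjoint_right]
        rintro x (rfl | rfl)
        · exact hwv
        · exact hv
      have hmatch' := hmatch.sup (SimpleGraph.Subgraph.IsMatching.subgraphOfAdj hw) hd
      have hmem : (M ⊔ G.subgraphOfAdj hw).verts.ncard ∈ S := ⟨_, hmatch', rfl⟩
      have hle := le_csSup hbdd hmem
      have hcard2 : (M ⊔ G.subgraphOfAdj hw).verts.ncard = M.verts.ncard + 2 := by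
        have : (M ⊔ G.subgraphOfAdj hw).verts = M.verts ∪ {w, v} := by
          simp [SimpleGraph.Subgraph.verts_sup]
        rw [this, Set.ncard_union_eq (by
            rw [Set.disjoint_right]; rintro x (rfl | rfl) <;> assumption)
          (Set.toFinite _) (Set.toFinite _), Set.ncard_pair hw.ne]
      omega
  · refine ⟨⟨Set.univ, fun a b => M.Adj ↑a ↑b, fun hab => M.adj_sub hab,
      fun hab => Set.mem_univ _, ⟨fun a b hab => M.adj_symm hab⟩⟩, ?_, fun a => Set.mem_univ a⟩
    intro a _
    obtain ⟨w, hw, hw'⟩ := hmatch a.2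
    exact ⟨⟨w, M.edge_vert (M.adj_symm hw)⟩, hw, fun y hy => Subtype.ext (hw' ↑y hy)⟩

def fstHom (G : SimpleGraph V) (H : SimpleGraph W) : G.tensor H →g G :=
  ⟨Prod.fst, fun h => (show G.Adj _ _ ∧ H.Adj _ _ from h).1⟩

def sndHom (G : SimpleGraph V) (H : SimpleGraph W) : G.tensor H →g H :=
  ⟨Prod.snd, fun h => (show G.Adj _ _ ∧ H.Adj _ _ from h).2⟩

lemma tensor_packing (G : SimpleGraph V) (H : SimpleGraph W) {P : Set V} {Q : Set W}
    (hP : G.Packing3 P) (hQ : H.Packing3 Q) : (G.tensor H).Packing3 (P ×ˢ Q) := by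
  intro a ha b hb hne
  by_cases h1 : a.1 = b.1
  · have h2 : a.2 ≠ b.2 := fun h => hne (Prod.ext h1 h)
    rcases hQ ha.2 hb.2 h2 with h | h
    · exact Or.inl fun hr => h (hr.map (sndHom G H))
    · by_cases hr : (G.tensor H).Reachable a b
      · refine Or.inr ?_
        obtain ⟨w, hw⟩ := hr.exists_walk_length_eq_dist
        have := SimpleGraph.dist_le (w.map (sndHom G H))
        rw [SimpleGraph.Walk.length_map, hw] at this
        have heq : H.dist ((sndHom G H) a) ((sndHom G H) b) = H.dist a.2 b.2 := rfl
        rw [heq] at this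
        omega
      · exact Or.inl hr
  · rcases hP ha.1 hb.1 h1 with h | h
    · exact Or.inl fun hr => h (hr.map (fstHom G H))
    · by_cases hr : (G.tensor H).Reachable a b
      · refine Or.inr ?_
        obtain ⟨w, hw⟩ := hr.exists_walk_length_eq_dist
        have := SimpleGraph.dist_le (w.map (fstHom G H))
        rw [SimpleGraph.Walk.length_map, hw] at this
        have heq : G.dist ((fstHom G H) a) ((fstHom G H) b) = G.dist a.1 b.1 := rfl
        rw [heq] at this
        omega
      · exact Or.inl hr

lemma ncard_prod' (P : Set V) (Q : Set W) : (P ×ˢ Q).ncard = P.ncard * Q.ncard := by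
  rw [← Nat.card_coe_set_eq, ← Nat.card_coe_set_eq, ← Nat.card_coe_set_eq,
    Nat.card_congr (Equiv.Set.prod P Q), Nat.card_prod]

lemma packNum3_attained [Fintype V] (G : SimpleGraph V) :
    ∃ P : Set V, G.Packing3 P ∧ P.ncard = G.packNum3 := by
  have hne : {n | ∃ P : Set V, G.Packing3 P ∧ P.ncard = n}.Nonempty :=
    ⟨0, ∅, Set.pairwise_empty _, Set.ncard_empty _⟩
  have hbdd : BddAbove {n | ∃ P : Set V, G.Packing3 P ∧ P.ncard = n} := by
    refine ⟨Fintype.card V, ?_⟩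
    rintro n ⟨P, -, rfl⟩
    calc P.ncard ≤ (Set.univ : Set V).ncard :=
          Set.ncard_le_ncard (Set.subset_univ _) Set.finite_univ
      _ = Fintype.card V := by simp [Set.ncard_univ]
  exact Nat.sSup_mem hne hbdd

theorem stmt7 {V W : Type*} [Fintype V] [Fintype W] (G : SimpleGraph V) (H : SimpleGraph W)
    (hG : G.NoIsolated) (hH : H.NoIsolated)
    (hG2 : G.pairedDomNum = 2 * G.packNum3) (hH2 : H.pairedDomNum = 2 * H.packNum3) :
    G.pairedDomNum * H.pairedDomNum ≤ 2 * (G.tensor H).pairedDomNum := by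
  obtain ⟨P, hP, hPc⟩ := packNum3_attained G
  obtain ⟨Q, hQ, hQc⟩ := packNum3_attained H
  have hGH : (G.tensor H).NoIsolated := by
    rintro ⟨v, w⟩
    obtain ⟨u, hu⟩ := hG v
    obtain ⟨x, hx⟩ := hH w
    exact ⟨(u, x), (show G.Adj u v ∧ H.Adj x w from ⟨hu, hx⟩)⟩
  obtain ⟨D0, hD0⟩ := exists_paired _ hGH
  have hSne : {n | ∃ D : Set (V × W), (G.tensor H).PairedDominating D ∧ D.ncard = n}.Nonempty :=
    ⟨D0.ncard, D0, hD0, rfl⟩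
  obtain ⟨D, hD, hDc⟩ := Nat.sInf_mem hSne
  have hkey : 2 * (P ×ˢ Q).ncard ≤ D.ncard :=
    key_count (G.tensor H) hD (tensor_packing G H hP hQ)
  rw [ncard_prod', hPc, hQc] at hkey
  rw [hG2, hH2]
  have hDc' : D.ncard = (G.tensor H).pairedDomNum := hDc
  rw [hDc'] at hkey
  calc 2 * G.packNum3 * (2 * H.packNum3) = 2 * (2 * (G.packNum3 * H.packNum3)) := by ring
    _ ≤ 2 * (G.tensor H).pairedDomNum := by omega
end

section
/- If T_1 and T_2 are trees (each with at least one edge), then γ_pr(T_1 × T_2) ≥ (1/2)·γ_pr(T_1)·γ_pr(T_2). -/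
set_option linter.unusedVariables false
set_option linter.unnecessarySeqFocus false

open SimpleGraph

variable {V : Type*} {W : Type*}

section GeneralLemmas

open SimpleGraph

variable {X : Type*} {Y : Type*}

lemma tensor_walk_proj {G : SimpleGraph X} {H : SimpleGraph Y} {p q : X × Y}
    (w : (G.tensor H).Walk p q) :
    ∃ (w1 : G.Walk p.1 q.1) (w2 : H.Walk p.2 q.2),
      w1.length = w.length ∧ w2.length = w.length := by
  induction w with
  | nil => exact ⟨.nil, .nil, rfl, rfl⟩
  | cons h w ih =>
    obtain ⟨w1, w2, h1, h2⟩ := ih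
    exact ⟨.cons (show G.Adj _ _ ∧ H.Adj _ _ from h).1 w1, .cons (show G.Adj _ _ ∧ H.Adj _ _ from h).2 w2, by simp [h1], by simp [h2]⟩

lemma packing_prod {G : SimpleGraph X} {H : SimpleGraph Y} {P : Set X} {Q : Set Y}
    (hP : G.Packing3 P) (hQ : H.Packing3 Q) : (G.tensor H).Packing3 (P ×ˢ Q) := by
  rintro ⟨u, x⟩ ⟨hu, hx⟩ ⟨v, y⟩ ⟨hv, hy⟩ hne
  by_cases hr : (G.tensor H).Reachable (u, x) (v, y)
  · right
    obtain ⟨w, hw⟩ := hr.exists_walk_length_eq_dist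
    obtain ⟨w1, w2, hl1, hl2⟩ := tensor_walk_proj w
    by_cases huv : u = v
    · subst huv
      have hxy : x ≠ y := fun h => hne (by simp [h])
      rcases hQ hx hy hxy with h | h
      · exact absurd ⟨w2⟩ h
      · refine lt_of_lt_of_le h ?_
        rw [← hw, ← hl2]; exact SimpleGraph.dist_le w2
    · rcases hP hu hv huv with h | h
      · exact absurd ⟨w1⟩ h
      · refine lt_of_lt_of_le h ?_
        rw [← hw, ← hl1]; exact SimpleGraph.dist_le w1
  · exact Or.inl hr

lemma dist_le_add3 {G : SimpleGraph X} {a b c : X} (h1 : G.Reachable a b)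
    (h2 : G.Reachable b c) : G.dist a c ≤ G.dist a b + G.dist b c := by
  obtain ⟨w1, hw1⟩ := h1.exists_walk_length_eq_dist
  obtain ⟨w2, hw2⟩ := h2.exists_walk_length_eq_dist
  calc G.dist a c ≤ (w1.append w2).length := SimpleGraph.dist_le _
    _ = G.dist a b + G.dist b c := by rw [SimpleGraph.Walk.length_append, hw1, hw2]

/-- In any finite graph, twice the size of a 3-packing is at most the size of any
paired dominating set. -/
lemma two_packing_le_paired {G : SimpleGraph X} [Fintype X] {P D : Set X}
    (hP : G.Packing3 P) (hD : G.PairedDominating D) : 2 * P.ncard ≤ D.ncard := by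
  classical
  obtain ⟨hdom, M, hM⟩ := hD
  have hM' := SimpleGraph.Subgraph.isPerfectMatching_iff.mp hM
  choose μ hμ hμu using hM'
  have hμadj : ∀ v : D, G.Adj ↑v ↑(μ v) := fun v => M.adj_sub (hμ v)
  have hμinv : ∀ v : D, μ (μ v) = v := fun v => (hμu (μ v) v (M.adj_symm (hμ v))).symm
  choose d hdmem hdadj using hdom
  have hreach : ∀ v, G.Reachable (d v) v := by
    intro v
    rcases hdadj v with h | h
    · rw [h]
    · exact h.reachable
  have hdist1 : ∀ v, G.dist (d v) v ≤ 1 := by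
    intro v
    rcases hdadj v with h | h
    · simp [h, SimpleGraph.dist_self]
    · rw [SimpleGraph.dist_eq_one_iff_adj.mpr h]
  set e : X → D := fun v => ⟨d v, hdmem v⟩ with he
  -- key: distinct packing vertices give disjoint matched pairs
  have key : ∀ u ∈ P, ∀ v ∈ P, u ≠ v →
      ∀ (c : D), (c = e u ∨ c = μ (e u)) → (c = e v ∨ c = μ (e v)) → False := by
    intro u hu v hv huv c hc1 hc2
    have hduv : G.Reachable (d u) (d v) ∧ G.dist (d u) (d v) ≤ 1 := by
      rcases hc1 with rfl | rfl <;> rcases hc2 with h2 | h2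
      · rw [show d u = d v from congrArg Subtype.val h2]
        exact ⟨Reachable.refl _, by simp [SimpleGraph.dist_self]⟩
      · -- e u = μ (e v) : so d u is adjacent to d v
        have : G.Adj ↑(e v) ↑(e u) := h2 ▸ hμadj (e v)
        exact ⟨this.symm.reachable, le_of_eq (SimpleGraph.dist_eq_one_iff_adj.mpr this.symm)⟩
      · have : G.Adj ↑(e u) ↑(e v) := h2 ▸ hμadj (e u)
        exact ⟨this.reachable, le_of_eq (SimpleGraph.dist_eq_one_iff_adj.mpr this)⟩
      · -- μ (e u) = μ (e v)
        have : e u = e v := by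
          have := congrArg μ h2
          rwa [hμinv, hμinv] at this
        rw [show d u = d v from congrArg Subtype.val this]
        exact ⟨Reachable.refl _, by simp [SimpleGraph.dist_self]⟩
    have hruv : G.Reachable u v :=
      ((hreach u).symm.trans hduv.1).trans (hreach v)
    have hd3 : G.dist u v ≤ 3 := by
      have t1 : G.dist u v ≤ G.dist u (d u) + G.dist (d u) v :=
        dist_le_add3 (hreach u).symm ((hduv.1).trans (hreach v))
      have t2 : G.dist (d u) v ≤ G.dist (d u) (d v) + G.dist (d v) v :=
        dist_le_add3 hduv.1 (hreach v)
      have e1 : G.dist u (d u) ≤ 1 := by rw [SimpleGraph.dist_comm]; exact hdist1 u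
      have := hdist1 v
      omega
    rcases hP hu hv huv with h | h
    · exact h hruv
    · omega
  -- build the injection
  have hPfin : P.Finite := Set.toFinite P
  have hDfin : D.Finite := Set.toFinite D
  set f : P × Bool → D := fun z => cond z.2 (μ (e ↑z.1)) (e ↑z.1) with hf
  have hinj : Function.Injective f := by
    rintro ⟨⟨u, hu⟩, b⟩ ⟨⟨v, hv⟩, b'⟩ heq
    by_cases huv : u = v
    · subst huv
      suffices hbb : b = b' by simp [hbb]
      by_contra hbb
      have hne' : e u ≠ μ (e u) := fun hh => (hμadj (e u)).ne (congrArg Subtype.val hh)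
      cases b <;> cases b'
      · exact hbb rfl
      · exact hne' heq
      · exact hne' heq.symm
      · exact hbb rfl
    · exfalso
      refine key u hu v hv huv (f (⟨u, hu⟩, b)) ?_ ?_
      · cases b
        · exact Or.inl rfl
        · exact Or.inr rfl
      · rw [heq]; cases b'
        · exact Or.inl rfl
        · exact Or.inr rfl
  calc 2 * P.ncard = Nat.card (P × Bool) := by
        rw [Nat.card_prod, Nat.card_coe_set_eq, Nat.card_eq_fintype_card (α := Bool)]
        simp [Nat.mul_comm]
    _ ≤ Nat.card D := Nat.card_le_card_of_injective f hinj
    _ = D.ncard := Nat.card_coe_set_eq D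

end GeneralLemmas
section ProdPaired

open SimpleGraph

variable {X : Type*} {Y : Type*}

lemma paired_dominating_prod {G : SimpleGraph X} {H : SimpleGraph Y} {D1 : Set X} {D2 : Set Y}
    (h1 : G.PairedDominating D1) (h2 : H.PairedDominating D2) :
    (G.tensor H).PairedDominating (D1 ×ˢ D2) := by
  classical
  obtain ⟨hdom1, M1, hM1⟩ := h1
  obtain ⟨hdom2, M2, hM2⟩ := h2
  have hM1' := SimpleGraph.Subgraph.isPerfectMatching_iff.mp hM1
  have hM2' := SimpleGraph.Subgraph.isPerfectMatching_iff.mp hM2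
  choose μ1 hμ1 hμ1u using hM1'
  choose μ2 hμ2 hμ2u using hM2'
  have hμ1adj : ∀ v : D1, G.Adj ↑v ↑(μ1 v) := fun v => M1.adj_sub (hμ1 v)
  have hμ2adj : ∀ v : D2, H.Adj ↑v ↑(μ2 v) := fun v => M2.adj_sub (hμ2 v)
  have hμ1inv : ∀ v : D1, μ1 (μ1 v) = v := fun v => (hμ1u (μ1 v) v (M1.adj_symm (hμ1 v))).symm
  have hμ2inv : ∀ v : D2, μ2 (μ2 v) = v := fun v => (hμ2u (μ2 v) v (M2.adj_symm (hμ2 v))).symm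
  constructor
  · rintro ⟨v, w⟩
    obtain ⟨u1, hu1, hc1⟩ := hdom1 v
    obtain ⟨u2, hu2, hc2⟩ := hdom2 w
    rcases hc1 with rfl | hc1 <;> rcases hc2 with rfl | hc2
    · exact ⟨(u1, u2), ⟨hu1, hu2⟩, Or.inl rfl⟩
    · refine ⟨(↑(μ1 ⟨u1, hu1⟩), u2), ⟨(μ1 ⟨u1, hu1⟩).2, hu2⟩, Or.inr (show G.Adj _ _ ∧ H.Adj _ _ from ⟨?_, hc2⟩)⟩
      exact (hμ1adj ⟨u1, hu1⟩).symm
    · refine ⟨(u1, ↑(μ2 ⟨u2, hu2⟩)), ⟨hu1, (μ2 ⟨u2, hu2⟩).2⟩, Or.inr (show G.Adj _ _ ∧ H.Adj _ _ from ⟨hc1, ?_⟩)⟩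
      exact (hμ2adj ⟨u2, hu2⟩).symm
    · exact ⟨(u1, u2), ⟨hu1, hu2⟩, Or.inr (show G.Adj _ _ ∧ H.Adj _ _ from ⟨hc1, hc2⟩)⟩
  · -- the matching
    have hmem : ∀ z : (D1 ×ˢ D2 : Set (X × Y)), (↑z : X × Y).1 ∈ D1 ∧ (↑z : X × Y).2 ∈ D2 :=
      fun z => z.2
    set Φ : (D1 ×ˢ D2 : Set (X × Y)) → (D1 ×ˢ D2 : Set (X × Y)) :=
      fun z => ⟨(↑(μ1 ⟨(↑z : X × Y).1, (hmem z).1⟩), ↑(μ2 ⟨(↑z : X × Y).2, (hmem z).2⟩)),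
        ⟨(μ1 _).2, (μ2 _).2⟩⟩ with hΦ
    have hΦadj : ∀ z, ((G.tensor H).induce (D1 ×ˢ D2)).Adj z (Φ z) := by
      intro z
      exact (show G.Adj _ _ ∧ H.Adj _ _ from ⟨hμ1adj ⟨(↑z : X × Y).1, (hmem z).1⟩, hμ2adj ⟨(↑z : X × Y).2, (hmem z).2⟩⟩)
    have hΦinv : ∀ z, Φ (Φ z) = z := by
      intro z
      apply Subtype.ext
      apply Prod.ext
      · show ↑(μ1 ⟨↑(μ1 ⟨(↑z : X × Y).1, (hmem z).1⟩), _⟩) = (↑z : X × Y).1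
        have : (⟨↑(μ1 ⟨(↑z : X × Y).1, (hmem z).1⟩), _⟩ : D1) = μ1 ⟨(↑z : X × Y).1, (hmem z).1⟩ :=
          Subtype.ext rfl
        rw [this, hμ1inv]
      · show ↑(μ2 ⟨↑(μ2 ⟨(↑z : X × Y).2, (hmem z).2⟩), _⟩) = (↑z : X × Y).2
        have : (⟨↑(μ2 ⟨(↑z : X × Y).2, (hmem z).2⟩), _⟩ : D2) = μ2 ⟨(↑z : X × Y).2, (hmem z).2⟩ :=
          Subtype.ext rfl
        rw [this, hμ2inv]
    refine ⟨⟨Set.univ, fun a b => b = Φ a ∨ a = Φ b, ?_, ?_, ?_⟩, ?_⟩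
    · rintro a b (rfl | rfl)
      · exact hΦadj a
      · exact ((G.tensor H).induce (D1 ×ˢ D2)).adj_symm (hΦadj b)
    · intro a b _
      exact Set.mem_univ a
    · refine ⟨?_⟩; rintro a b (rfl | rfl)
      · exact Or.inr rfl
      · exact Or.inl rfl
    · rw [SimpleGraph.Subgraph.isPerfectMatching_iff]
      intro z
      refine ⟨Φ z, Or.inl rfl, ?_⟩
      rintro y (rfl | rfl)
      · rfl
      · rw [hΦinv]
  
end ProdPaired
section TreeInfra

open SimpleGraph

variable {V : Type*} {T : SimpleGraph V}

lemma tree_path_length (ht : T.IsTree) {x y : V} (p : T.Walk x y) (hp : p.IsPath) :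
    p.length = T.dist x y := by
  obtain ⟨q, hq, hql⟩ := ht.1.exists_path_of_dist x y
  have heq : (⟨p, hp⟩ : T.Path x y) = ⟨q, hq⟩ := ht.2.path_unique _ _
  rw [Subtype.mk_eq_mk] at heq
  rw [heq, hql]

lemma tree_adj_dist_root (ht : T.IsTree) (r : V) {a b : V} (hab : T.Adj a b) :
    T.dist r b = T.dist r a + 1 ∨ T.dist r a = T.dist r b + 1 := by
  classical
  have hconn := ht.1
  have hne : T.dist r a ≠ T.dist r b := by
    intro hd
    obtain ⟨p, hp, hpl⟩ := hconn.exists_path_of_dist r a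
    have hbs : b ∉ p.support := by
      intro hbs
      have h1 : T.dist r b ≤ (p.takeUntil b hbs).length := SimpleGraph.dist_le _
      have h2 : (p.takeUntil b hbs).length + (p.dropUntil b hbs).length = p.length := by
        rw [← SimpleGraph.Walk.length_append, p.take_spec hbs]
      have h3 : 1 ≤ (p.dropUntil b hbs).length := by
        have h4 := SimpleGraph.dist_le (p.dropUntil b hbs)
        have hba : 1 ≤ T.dist b a := by
          have := hconn.pos_dist_of_ne hab.ne'
          omega
        omega
      omega
    have hrs : b ∉ p.reverse.support := by
      rwa [SimpleGraph.Walk.support_reverse, List.mem_reverse]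
    have hq : ((SimpleGraph.Walk.cons hab.symm p.reverse).reverse).IsPath :=
      (SimpleGraph.Walk.IsPath.cons hp.reverse hrs).reverse
    have hlen := tree_path_length ht _ hq
    simp only [SimpleGraph.Walk.length_reverse, SimpleGraph.Walk.length_cons] at hlen
    omega
  have t1 : T.dist r b ≤ T.dist r a + 1 := by
    have := hconn.dist_triangle (u := r) (v := a) (w := b)
    rw [SimpleGraph.dist_eq_one_iff_adj.mpr hab] at this
    omega
  have t2 : T.dist r a ≤ T.dist r b + 1 := by
    have := hconn.dist_triangle (u := r) (v := b) (w := a)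
    rw [SimpleGraph.dist_eq_one_iff_adj.mpr hab.symm] at this
    omega
  omega

lemma tree_parent_unique (ht : T.IsTree) (r : V) {p q v : V} (h1 : T.Adj v p) (h2 : T.Adj v q)
    (hd1 : T.dist r p + 1 = T.dist r v) (hd2 : T.dist r q + 1 = T.dist r v) : p = q := by
  classical
  obtain ⟨wp, hwp, hwpl⟩ := ht.1.exists_path_of_dist r p
  obtain ⟨wq, hwq, hwql⟩ := ht.1.exists_path_of_dist r q
  have hv1 : v ∉ wp.support := by
    intro hv
    have ha : T.dist r v ≤ (wp.takeUntil v hv).length := SimpleGraph.dist_le _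
    have hb := SimpleGraph.Walk.length_takeUntil_le wp hv
    omega
  have hv2 : v ∉ wq.support := by
    intro hv
    have ha : T.dist r v ≤ (wq.takeUntil v hv).length := SimpleGraph.dist_le _
    have hb := SimpleGraph.Walk.length_takeUntil_le wq hv
    omega
  have hp1 : (SimpleGraph.Walk.cons h1 wp.reverse).IsPath :=
    SimpleGraph.Walk.IsPath.cons hwp.reverse
      (by rwa [SimpleGraph.Walk.support_reverse, List.mem_reverse])
  have hp2 : (SimpleGraph.Walk.cons h2 wq.reverse).IsPath :=
    SimpleGraph.Walk.IsPath.cons hwq.reverse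
      (by rwa [SimpleGraph.Walk.support_reverse, List.mem_reverse])
  have heq : (⟨_, hp1⟩ : T.Path v r) = ⟨_, hp2⟩ := ht.2.path_unique _ _
  rw [Subtype.mk_eq_mk] at heq
  have := congrArg (fun w : T.Walk v r => w.getVert 1) heq
  simpa [SimpleGraph.Walk.getVert_cons_succ, SimpleGraph.Walk.getVert_zero] using this

lemma tree_parent_exists (hconn : T.Connected) (r : V) {v : V} (hv : v ≠ r) :
    ∃ p, T.Adj v p ∧ T.dist r p + 1 = T.dist r v := by
  obtain ⟨w, hwl⟩ := hconn.exists_walk_length_eq_dist v r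
  cases w with
  | nil => exact absurd rfl hv
  | @cons _ x _ h w' =>
    refine ⟨x, h, ?_⟩
    have hl : w'.length + 1 = T.dist v r := by simpa using hwl
    have h1 : T.dist x r ≤ w'.length := SimpleGraph.dist_le _
    have h2 : T.dist v r ≤ 1 + T.dist x r := by
      have := hconn.dist_triangle (u := v) (v := x) (w := r)
      rw [SimpleGraph.dist_eq_one_iff_adj.mpr h] at this
      omega
    have e1 : T.dist r x = T.dist x r := SimpleGraph.dist_comm ..
    have e2 : T.dist r v = T.dist v r := SimpleGraph.dist_comm ..
    omega

lemma tree_classify (ht : T.IsTree) (r : V) (par : V → V)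
    (hpar : ∀ v, v ≠ r → T.Adj v (par v) ∧ T.dist r (par v) + 1 = T.dist r v)
    {u v : V} (hd : T.dist u v ≤ 3) (hdep : T.dist r v ≤ T.dist r u) :
    v = u ∨ v = par u ∨ v = par (par u) ∨ v = par (par (par u)) ∨
      par v = par u ∨ par v = par (par u) := by
  have hconn := ht.1
  have F1 : ∀ a b, T.Adj a b → (b = par a ∧ T.dist r b + 1 = T.dist r a) ∨
      (a = par b ∧ T.dist r a + 1 = T.dist r b) := by
    intro a b hab
    have hdrr : T.dist r r = 0 := SimpleGraph.dist_self ..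
    rcases tree_adj_dist_root ht r hab with h | h
    · right
      have hbr : b ≠ r := by intro h'; rw [h'] at h; omega
      obtain ⟨hadj, hdd⟩ := hpar b hbr
      have := tree_parent_unique ht r hab.symm hadj (by omega) hdd
      exact ⟨this, by omega⟩
    · left
      have har : a ≠ r := by intro h'; rw [h'] at h; omega
      obtain ⟨hadj, hdd⟩ := hpar a har
      have := tree_parent_unique ht r hab hadj (by omega) hdd
      exact ⟨this, by omega⟩
  obtain ⟨w, hwl⟩ := hconn.exists_walk_length_eq_dist u v
  have hw3 : w.length ≤ 3 := le_trans (le_of_eq hwl) hd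
  clear hwl hd
  cases w with
  | nil => exact Or.inl rfl
  | @cons _ x _ h1 w =>
    cases w with
    | nil =>
      rcases F1 u v h1 with ⟨e1, d1⟩ | ⟨e1, d1⟩
      · exact Or.inr (Or.inl e1)
      · omega
    | @cons _ y _ h2 w =>
      cases w with
      | nil =>
        -- length 2 : u - x - v
        rcases F1 u x h1 with ⟨e1, d1⟩ | ⟨e1, d1⟩ <;>
          rcases F1 x v h2 with ⟨e2, d2⟩ | ⟨e2, d2⟩
        · exact Or.inr (Or.inr (Or.inl (by rw [e2, e1])))
        · exact Or.inr (Or.inr (Or.inr (Or.inr (Or.inl (by rw [← e2, e1])))))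
        · exact Or.inl (by rw [e2, ← e1])
        · omega
      | @cons _ z _ h3 w =>
        cases w with
        | nil =>
          -- length 3 : u - x - y - v   (here middle names: x, y ; last adj h3 : y ~ v)
          rcases F1 u x h1 with ⟨e1, d1⟩ | ⟨e1, d1⟩ <;>
            rcases F1 x y h2 with ⟨e2, d2⟩ | ⟨e2, d2⟩ <;>
            rcases F1 y v h3 with ⟨e3, d3⟩ | ⟨e3, d3⟩
          · exact Or.inr (Or.inr (Or.inr (Or.inl (by rw [e3, e2, e1]))))
          · exact Or.inr (Or.inr (Or.inr (Or.inr (Or.inr (by rw [← e3, e2, e1])))))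
          · exact Or.inr (Or.inl (by rw [e3, ← e2, e1]))
          · omega
          · exact Or.inr (Or.inl (by rw [e3, e2, ← e1]))
          · omega
          · omega
          · omega
        | cons h4 w =>
          exfalso
          simp only [SimpleGraph.Walk.length_cons] at hw3
          omega

end TreeInfra
section TreeLemma

open SimpleGraph

variable {V : Type*}

lemma tree_paired_le_packing {T : SimpleGraph V} [Fintype V] (ht : T.IsTree)
    (he : ∃ a b, T.Adj a b) :
    ∃ (P D : Set V), T.Packing3 P ∧ T.PairedDominating D ∧ D.ncard ≤ 2 * P.ncard := by
  classical
  have hconn := ht.1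
  obtain ⟨r⟩ := hconn.nonempty
  set dep : V → ℕ := fun v => T.dist r v with hdepdef
  have hdr : dep r = 0 := SimpleGraph.dist_self ..
  have hdep0 : ∀ v, dep v = 0 → v = r := by
    intro v h
    exact ((hconn.dist_eq_zero_iff).mp h).symm
  have hpar0 : ∀ v : V, ∃ p, (v = r → p = r) ∧ (v ≠ r → T.Adj v p ∧ dep p + 1 = dep v) := by
    intro v
    by_cases hv : v = r
    · exact ⟨r, fun _ => rfl, fun h => absurd hv h⟩
    · obtain ⟨p, h1, h2⟩ := tree_parent_exists hconn r hv
      exact ⟨p, fun h => absurd h hv, fun _ => ⟨h1, h2⟩⟩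
  choose par hparr hpar using hpar0
  have hpar_r : par r = r := hparr r rfl
  have hpadj : ∀ v, v ≠ r → T.Adj v (par v) := fun v h => (hpar v h).1
  have hpdep : ∀ v, v ≠ r → dep (par v) + 1 = dep v := fun v h => (hpar v h).2
  set vtx : Finset (V × V) → Finset V := fun pr => pr.biUnion (fun q => {q.1, q.2}) with hvtxdef
  have hvtx_mem : ∀ (pr : Finset (V × V)) (x : V),
      x ∈ vtx pr ↔ ∃ q ∈ pr, x = q.1 ∨ x = q.2 := by
    intro pr x
    simp [hvtxdef]
  set Dom : Finset (V × V) → V → Prop :=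
    fun pr v => ∃ x ∈ vtx pr, x = v ∨ T.Adj x v with hDomdef
  have hvtx_ins : ∀ (np : V × V) (pr : Finset (V × V)) (x : V),
      x ∈ vtx pr → x ∈ vtx (insert np pr) := by
    intro np pr x hx
    rw [hvtx_mem] at hx ⊢
    obtain ⟨q, hq, h⟩ := hx
    exact ⟨q, Finset.mem_insert_of_mem hq, h⟩
  have hvtx_np1 : ∀ (np : V × V) (pr : Finset (V × V)), np.1 ∈ vtx (insert np pr) := by
    intro np pr
    rw [hvtx_mem]
    exact ⟨np, Finset.mem_insert_self _ _, Or.inl rfl⟩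
  have hvtx_np2 : ∀ (np : V × V) (pr : Finset (V × V)), np.2 ∈ vtx (insert np pr) := by
    intro np pr
    rw [hvtx_mem]
    exact ⟨np, Finset.mem_insert_self _ _, Or.inr rfl⟩
  have hDmono : ∀ (np : V × V) (pr : Finset (V × V)) (v : V),
      Dom pr v → Dom (insert np pr) v := by
    rintro np pr v ⟨x, hx, h⟩
    exact ⟨x, hvtx_ins np pr x hx, h⟩
  have main : ∀ (n : ℕ) (pairs : Finset (V × V)) (P : Finset V),
      (Finset.univ.filter (fun v => ¬ Dom pairs v)).card ≤ n →
      (∀ q ∈ pairs, T.Adj q.1 q.2) →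
      (∀ q ∈ pairs, ∀ q' ∈ pairs, q ≠ q' →
        q.1 ≠ q'.1 ∧ q.1 ≠ q'.2 ∧ q.2 ≠ q'.1 ∧ q.2 ≠ q'.2) →
      pairs.card = P.card →
      (∀ u ∈ P, ∀ v ∈ P, u ≠ v → 3 < T.dist u v) →
      (∀ u ∈ P, ∀ v, ¬ Dom pairs v → dep v ≤ dep u ∧ ¬ (T.dist u v ≤ 3)) →
      ∃ (pairs' : Finset (V × V)) (P' : Finset V),
        (∀ q ∈ pairs', T.Adj q.1 q.2) ∧
        (∀ q ∈ pairs', ∀ q' ∈ pairs', q ≠ q' →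
          q.1 ≠ q'.1 ∧ q.1 ≠ q'.2 ∧ q.2 ≠ q'.1 ∧ q.2 ≠ q'.2) ∧
        pairs'.card = P'.card ∧
        (∀ u ∈ P', ∀ v ∈ P', u ≠ v → 3 < T.dist u v) ∧
        (∀ v, Dom pairs' v) := by
    intro n
    induction n with
    | zero =>
      intro pairs P C0 C1 C2 C3 C4 C5
      refine ⟨pairs, P, C1, C2, C3, C4, ?_⟩
      intro v
      by_contra hv
      have hmem : v ∈ Finset.univ.filter (fun v => ¬ Dom pairs v) := by
        simp [hv]
      rw [Finset.card_eq_zero.mp (Nat.le_zero.mp C0)] at hmem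
      simp at hmem
    | succ n ih =>
      intro pairs P C0 C1 C2 C3 C4 C5
      by_cases hall : ∀ v, Dom pairs v
      · exact ⟨pairs, P, C1, C2, C3, C4, hall⟩
      push_neg at hall
      set U := Finset.univ.filter (fun v => ¬ Dom pairs v) with hU
      have hUne : U.Nonempty := by
        obtain ⟨v, hv⟩ := hall
        exact ⟨v, by simp [hU, hv]⟩
      obtain ⟨u, huU, hmax⟩ := Finset.exists_max_image U dep hUne
      have hundom : ¬ Dom pairs u := by
        rw [hU, Finset.mem_filter] at huU
        exact huU.2
      have humax : ∀ v, ¬ Dom pairs v → dep v ≤ dep u := by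
        intro v hv
        exact hmax v (by simp [hU, hv])
      have hu_not_vtx : u ∉ vtx pairs := fun h => hundom ⟨u, h, Or.inl rfl⟩
      have hnbr_not_vtx : ∀ x, T.Adj x u → x ∉ vtx pairs :=
        fun x hx h => hundom ⟨x, h, Or.inr hx⟩
      obtain ⟨np, hnp_adj, hnp1, hnp2, hcover⟩ :
          ∃ np : V × V, T.Adj np.1 np.2 ∧ np.1 ∉ vtx pairs ∧ np.2 ∉ vtx pairs ∧
            (∀ v, dep v ≤ dep u → T.dist u v ≤ 3 → Dom (insert np pairs) v) := by
        by_cases hu0 : dep u = 0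
        · have hur : u = r := hdep0 u hu0
          obtain ⟨a, b, hab⟩ := he
          have hc : ∃ c, T.Adj u c := by
            by_cases hau : a = u
            · exact ⟨b, hau ▸ hab⟩
            · obtain ⟨w, hwl⟩ := hconn.exists_walk_length_eq_dist u a
              cases w with
              | nil => exact absurd rfl hau
              | @cons _ x _ h w' => exact ⟨x, h⟩
          obtain ⟨c, hc⟩ := hc
          refine ⟨(u, c), hc, hu_not_vtx, hnbr_not_vtx c hc.symm, ?_⟩
          intro v hv _
          have hv0 : dep v = 0 := by omega
          have hvr : v = r := hdep0 v hv0
          exact ⟨u, hvtx_np1 (u, c) pairs, Or.inl (by rw [hur, hvr])⟩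
        · by_cases hu1 : dep u = 1
          · have hur : u ≠ r := fun h => by rw [h, hdr] at hu1; omega
            have hadj : T.Adj u (par u) := hpadj u hur
            refine ⟨(u, par u), hadj, hu_not_vtx, hnbr_not_vtx _ hadj.symm, ?_⟩
            intro v hv _
            have hp1r : par u = r := by
              have := hpdep u hur
              exact hdep0 _ (by omega)
            by_cases hv0 : dep v = 0
            · have hvr : v = r := hdep0 v hv0
              exact ⟨par u, hvtx_np2 (u, par u) pairs, Or.inl (by rw [hp1r, hvr])⟩
            · have hvr : v ≠ r := fun h => by rw [h, hdr] at hv0; exact hv0 rfl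
              have hpv : par v = r := by
                have h1 := hpdep v hvr
                have h2 : dep v = 1 := by omega
                exact hdep0 _ (by omega)
              refine ⟨par u, hvtx_np2 (u, par u) pairs, Or.inr ?_⟩
              have h3 := (hpadj v hvr).symm
              rwa [hpv, ← hp1r] at h3
          · have hur : u ≠ r := fun h => by rw [h, hdr] at hu0; exact hu0 rfl
            have hp1adj : T.Adj u (par u) := hpadj u hur
            have hp1dep : dep (par u) + 1 = dep u := hpdep u hur
            have hp1r : par u ≠ r := fun h => by rw [h, hdr] at hp1dep; omega
            have hp2adj : T.Adj (par u) (par (par u)) := hpadj _ hp1r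
            have hp1_not_vtx : par u ∉ vtx pairs := hnbr_not_vtx _ hp1adj.symm
            have hcov : ∀ (np : V × V),
                par u ∈ vtx (insert np pairs) →
                par (par u) ∈ vtx (insert np pairs) →
                ∀ v, dep v ≤ dep u → T.dist u v ≤ 3 → Dom (insert np pairs) v := by
              intro np hm1 hm2 v hv hd3
              have hcl := tree_classify ht r par (fun x hx => ⟨hpadj x hx, hpdep x hx⟩) hd3 hv
              rcases hcl with e | e | e | e | e | e
              · exact ⟨par u, hm1, Or.inr (by rw [e]; exact hp1adj.symm)⟩
              · exact ⟨par u, hm1, Or.inl e.symm⟩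
              · exact ⟨par (par u), hm2, Or.inl e.symm⟩
              · by_cases hp2r : par (par u) = r
                · refine ⟨par (par u), hm2, Or.inl ?_⟩
                  rw [e, hp2r, hpar_r]
                · exact ⟨par (par u), hm2, Or.inr (by rw [e]; exact hpadj _ hp2r)⟩
              · have hvr : v ≠ r := by
                  intro h
                  rw [h, hpar_r] at e
                  exact hp1r e.symm
                exact ⟨par u, hm1, Or.inr (by rw [← e]; exact (hpadj v hvr).symm)⟩
              · by_cases hvr : v = r
                · have h5 : par (par u) = r := by rw [hvr, hpar_r] at e; exact e.symm
                  exact ⟨par (par u), hm2, Or.inl (by rw [h5, hvr])⟩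
                · exact ⟨par (par u), hm2, Or.inr (by rw [← e]; exact (hpadj v hvr).symm)⟩
            by_cases hp2D : par (par u) ∈ vtx pairs
            · exact ⟨(u, par u), hp1adj, hu_not_vtx, hp1_not_vtx,
                hcov _ (hvtx_np2 _ _) (hvtx_ins _ _ _ hp2D)⟩
            · exact ⟨(par u, par (par u)), hp2adj, hp1_not_vtx, hp2D,
                hcov _ (hvtx_np1 _ _) (hvtx_np2 _ _)⟩
      have hu_cov : Dom (insert np pairs) u :=
        hcover u le_rfl (by rw [SimpleGraph.dist_self]; omega)
      have huP : u ∉ P := by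
        intro h
        exact (C5 u h u hundom).2 (by rw [SimpleGraph.dist_self]; omega)
      have hnpnew : np ∉ pairs := by
        intro h
        exact hnp1 ((hvtx_mem pairs np.1).mpr ⟨np, h, Or.inl rfl⟩)
      have hNmono : ∀ v, ¬ Dom (insert np pairs) v → ¬ Dom pairs v :=
        fun v hv hd => hv (hDmono np pairs v hd)
      have hold_mem : ∀ q ∈ pairs, q.1 ∈ vtx pairs ∧ q.2 ∈ vtx pairs := by
        intro q hq
        exact ⟨(hvtx_mem pairs q.1).mpr ⟨q, hq, Or.inl rfl⟩,
          (hvtx_mem pairs q.2).mpr ⟨q, hq, Or.inr rfl⟩⟩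
      refine ih (insert np pairs) (insert u P) ?_ ?_ ?_ ?_ ?_ ?_
      · have hsub : Finset.univ.filter (fun v => ¬ Dom (insert np pairs) v) ⊆ U := by
          intro v hv
          rw [Finset.mem_filter] at hv
          simp [hU, hNmono v hv.2]
        have hnmem : u ∉ Finset.univ.filter (fun v => ¬ Dom (insert np pairs) v) := by
          simp [hu_cov]
        have hlt : (Finset.univ.filter (fun v => ¬ Dom (insert np pairs) v)).card < U.card :=
          Finset.card_lt_card ((Finset.ssubset_iff_of_subset hsub).mpr ⟨u, huU, hnmem⟩)
        omega
      · intro q hq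
        rcases Finset.mem_insert.mp hq with rfl | hq'
        · exact hnp_adj
        · exact C1 q hq'
      · intro q hq q' hq' hne
        rcases Finset.mem_insert.mp hq with rfl | hq1 <;>
          rcases Finset.mem_insert.mp hq' with h2 | hq2
        · exact absurd h2.symm hne
        · obtain ⟨m1, m2⟩ := hold_mem q' hq2
          exact ⟨fun h => hnp1 (by rw [h]; exact m1), fun h => hnp1 (by rw [h]; exact m2),
            fun h => hnp2 (by rw [h]; exact m1), fun h => hnp2 (by rw [h]; exact m2)⟩
        · subst h2
          obtain ⟨m1, m2⟩ := hold_mem q hq1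
          exact ⟨fun h => hnp1 (by rw [← h]; exact m1), fun h => hnp2 (by rw [← h]; exact m1),
            fun h => hnp1 (by rw [← h]; exact m2), fun h => hnp2 (by rw [← h]; exact m2)⟩
        · exact C2 q hq1 q' hq2 hne
      · rw [Finset.card_insert_of_notMem hnpnew, Finset.card_insert_of_notMem huP, C3]
      · intro a ha b hb hne
        rcases Finset.mem_insert.mp ha with rfl | ha' <;>
          rcases Finset.mem_insert.mp hb with h2 | hb'
        · exact absurd h2.symm hne
        · have h := (C5 b hb' a hundom).2
          rw [SimpleGraph.dist_comm]
          omega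
        · subst h2
          have h := (C5 a ha' b hundom).2
          omega
        · exact C4 a ha' b hb' hne
      · intro a ha v hv
        have hv' := hNmono v hv
        rcases Finset.mem_insert.mp ha with rfl | ha'
        · exact ⟨humax v hv', fun hd3 => hv (hcover v (humax v hv') hd3)⟩
        · exact C5 a ha' v hv'
  obtain ⟨pairs', P', C1', C2', C3', C4', hdomall⟩ :=
    main (Fintype.card V) ∅ ∅
      (le_trans (Finset.card_filter_le _ _) (le_of_eq Finset.card_univ))
      (by simp) (by simp) (by simp) (by simp) (by simp)
  refine ⟨↑P', ↑(vtx pairs'), ?_, ⟨?_, ?_⟩, ?_⟩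
  · intro a ha b hb hne
    exact Or.inr (C4' a (Finset.mem_coe.mp ha) b (Finset.mem_coe.mp hb) hne)
  · intro v
    obtain ⟨x, hx, h⟩ := hdomall v
    exact ⟨x, Finset.mem_coe.mpr hx, h⟩
  · -- the perfect matching
    refine ⟨⟨Set.univ, fun a b => ∃ q ∈ pairs', ((a : V) = q.1 ∧ (b : V) = q.2) ∨
        ((a : V) = q.2 ∧ (b : V) = q.1), ?_, ?_, ?_⟩, ?_⟩
    · rintro a b ⟨q, hq, ⟨ha, hb⟩ | ⟨ha, hb⟩⟩
      · show T.Adj ↑a ↑b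
        rw [ha, hb]
        exact C1' q hq
      · show T.Adj ↑a ↑b
        rw [ha, hb]
        exact (C1' q hq).symm
    · intro a b _
      exact Set.mem_univ a
    · refine ⟨?_⟩; rintro a b ⟨q, hq, ⟨ha, hb⟩ | ⟨ha, hb⟩⟩
      · exact ⟨q, hq, Or.inr ⟨hb, ha⟩⟩
      · exact ⟨q, hq, Or.inl ⟨hb, ha⟩⟩
    · rw [SimpleGraph.Subgraph.isPerfectMatching_iff]
      intro a
      obtain ⟨q, hq, hcase⟩ := (hvtx_mem pairs' ↑a).mp (Finset.mem_coe.mp a.2)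
      rcases hcase with ha1 | ha2
      · refine ⟨⟨q.2, Finset.mem_coe.mpr ((hvtx_mem _ _).mpr ⟨q, hq, Or.inr rfl⟩)⟩,
          ⟨q, hq, Or.inl ⟨ha1, rfl⟩⟩, ?_⟩
        rintro y ⟨q', hq', ⟨hy1, hy2⟩ | ⟨hy1, hy2⟩⟩
        · by_cases hqq : q' = q
          · subst hqq
            exact Subtype.ext hy2
          · exact absurd (hy1.symm.trans ha1) (C2' q' hq' q hq hqq).1
        · by_cases hqq : q' = q
          · subst hqq
            exact absurd (hy1.symm.trans ha1) (C1' _ hq).ne'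
          · exact absurd (hy1.symm.trans ha1) (C2' q' hq' q hq hqq).2.2.1
      · refine ⟨⟨q.1, Finset.mem_coe.mpr ((hvtx_mem _ _).mpr ⟨q, hq, Or.inl rfl⟩)⟩,
          ⟨q, hq, Or.inr ⟨ha2, rfl⟩⟩, ?_⟩
        rintro y ⟨q', hq', ⟨hy1, hy2⟩ | ⟨hy1, hy2⟩⟩
        · by_cases hqq : q' = q
          · subst hqq
            exact absurd (hy1.symm.trans ha2) (C1' _ hq).ne
          · exact absurd (hy1.symm.trans ha2) (C2' q' hq' q hq hqq).2.1
        · by_cases hqq : q' = q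
          · subst hqq
            exact Subtype.ext hy2
          · exact absurd (hy1.symm.trans ha2) (C2' q' hq' q hq hqq).2.2.2
  · have hdisj : ∀ q ∈ pairs', ∀ q' ∈ pairs', q ≠ q' →
        Disjoint ({q.1, q.2} : Finset V) {q'.1, q'.2} := by
      intro q hq q' hq' hne
      obtain ⟨h1, h2, h3, h4⟩ := C2' q hq q' hq' hne
      simp only [Finset.disjoint_left, Finset.mem_insert, Finset.mem_singleton]
      rintro x (rfl | rfl) h
      · rcases h with h | h
        · exact h1 h
        · exact h2 h
      · rcases h with h | h
        · exact h3 h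
        · exact h4 h
    have hcard : (vtx pairs').card = 2 * pairs'.card := by
      simp only [hvtxdef]
      rw [Finset.card_biUnion hdisj]
      rw [Finset.sum_congr rfl (fun q hq => Finset.card_pair (C1' q hq).ne)]
      rw [Finset.sum_const, smul_eq_mul]
      ring
    rw [Set.ncard_coe_finset, Set.ncard_coe_finset, hcard, C3']

end TreeLemma
theorem stmt8 {V W : Type*} [Fintype V] [Fintype W] (T1 : SimpleGraph V) (T2 : SimpleGraph W)
    (h1 : T1.IsTree) (h2 : T2.IsTree) (he1 : ∃ a b, T1.Adj a b) (he2 : ∃ a b, T2.Adj a b) :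
    T1.pairedDomNum * T2.pairedDomNum ≤ 2 * (T1.tensor T2).pairedDomNum := by
  classical
  obtain ⟨P1, D1, hP1, hD1, hc1⟩ := tree_paired_le_packing h1 he1
  obtain ⟨P2, D2, hP2, hD2, hc2⟩ := tree_paired_le_packing h2 he2
  have ha : T1.pairedDomNum ≤ D1.ncard := Nat.sInf_le ⟨D1, hD1, rfl⟩
  have hb : T2.pairedDomNum ≤ D2.ncard := Nat.sInf_le ⟨D2, hD2, rfl⟩
  have hPP := packing_prod hP1 hP2
  have hprodcard : (P1 ×ˢ P2).ncard = P1.ncard * P2.ncard := by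
    rw [← Nat.card_coe_set_eq, ← Nat.card_coe_set_eq, ← Nat.card_coe_set_eq,
      ← Nat.card_prod]
    exact Nat.card_congr (Equiv.Set.prod P1 P2)
  have hlow : 2 * (P1.ncard * P2.ncard) ≤ (T1.tensor T2).pairedDomNum := by
    apply le_csInf
    · exact ⟨(D1 ×ˢ D2).ncard, D1 ×ˢ D2, paired_dominating_prod hD1 hD2, rfl⟩
    · rintro n ⟨D, hD, rfl⟩
      have h := two_packing_le_paired hPP hD
      rwa [hprodcard] at h
  calc T1.pairedDomNum * T2.pairedDomNum ≤ (2 * P1.ncard) * (2 * P2.ncard) :=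
        Nat.mul_le_mul (le_trans ha hc1) (le_trans hb hc2)
    _ = 2 * (2 * (P1.ncard * P2.ncard)) := by ring
    _ ≤ 2 * (T1.tensor T2).pairedDomNum := Nat.mul_le_mul_left _ hlow
end

section
/- For every tree T with at least one edge, γ_pr(T) = 2ρ_3(T): the paired domination number of a tree equals twice its 3-packing number. -/
set_option linter.unusedVariables false
set_option linter.unnecessarySeqFocus false

open SimpleGraph

variable {V : Type*} {W : Type*}

namespace TreeAux

variable {V : Type*} {T : SimpleGraph V}

lemma dist_succ (hc : T.Connected) {x y : V} {k : ℕ} (h : T.dist x y = k + 1) :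
    ∃ m, T.Adj x m ∧ T.dist m y = k := by
  obtain ⟨w, hw⟩ := hc.exists_walk_length_eq_dist x y
  rw [h] at hw
  cases w with
  | nil => simp at hw
  | cons hadj q =>
    rename_i m
    refine ⟨m, hadj, le_antisymm ?_ ?_⟩
    · have : T.dist m y ≤ q.length := SimpleGraph.dist_le q
      simp only [SimpleGraph.Walk.length_cons] at hw
      omega
    · have h1 : T.dist x y ≤ T.dist x m + T.dist m y := hc.dist_triangle
      have h2 : T.dist x m ≤ 1 := by
        have := SimpleGraph.dist_le (SimpleGraph.Walk.cons hadj SimpleGraph.Walk.nil)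
        simpa using this
      omega

lemma dist_one_adj (hc : T.Connected) {x y : V} (h : T.dist x y = 1) : T.Adj x y := by
  obtain ⟨m, hm, hd⟩ := dist_succ hc h
  rwa [(hc.dist_eq_zero_iff).mp hd] at hm

lemma concat_isPath {x y z : V} {p : T.Walk x y} (hp : p.IsPath) (hz : z ∉ p.support)
    (h : T.Adj y z) : (p.concat h).IsPath := by
  have : (p.concat h).reverse.IsPath := by
    rw [SimpleGraph.Walk.reverse_concat]
    rw [SimpleGraph.Walk.cons_isPath_iff]
    refine ⟨hp.reverse, ?_⟩
    simpa using hz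
  have := this.reverse; rwa [SimpleGraph.Walk.reverse_reverse] at this

end TreeAux

namespace TreeAux
variable {V : Type*} {T : SimpleGraph V}

lemma not_mem_support {r x y : V} (hc : T.Connected) (p : T.Walk r x)
    (hlen : p.length = T.dist r x) (hy : T.dist r x < T.dist r y) : y ∉ p.support := by
  classical
  intro hmem
  have h1 : T.dist r y ≤ (p.takeUntil y hmem).length := SimpleGraph.dist_le _
  have h2 : (p.takeUntil y hmem).length ≤ p.length :=
    SimpleGraph.Walk.length_takeUntil_le p hmem
  omega

lemma tree_parity (hT : T.IsTree) (r : V) {x y : V} (h : T.Adj x y) :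
    T.dist r x + 1 = T.dist r y ∨ T.dist r y + 1 = T.dist r x := by
  have hc := hT.isConnected
  have hd1 : T.dist r y ≤ T.dist r x + 1 := by
    have := hc.dist_triangle (u := r) (v := x) (w := y)
    have h2 : T.dist x y ≤ 1 := by
      have := SimpleGraph.dist_le (SimpleGraph.Walk.cons h SimpleGraph.Walk.nil)
      simpa using this
    omega
  have hd2 : T.dist r x ≤ T.dist r y + 1 := by
    have := hc.dist_triangle (u := r) (v := y) (w := x)
    have h2 : T.dist y x ≤ 1 := by
      have := SimpleGraph.dist_le (SimpleGraph.Walk.cons h.symm SimpleGraph.Walk.nil)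
      simpa using this
    omega
  have hne : T.dist r x ≠ T.dist r y := by
    classical
    intro heq
    obtain ⟨px, hpx, hlx⟩ := (hc r x).exists_path_of_dist
    obtain ⟨py, hpy, hly⟩ := (hc r y).exists_path_of_dist
    have hys : y ∉ px.support := by
      intro hmem
      have h1 : T.dist r y ≤ (px.takeUntil y hmem).length := SimpleGraph.dist_le _
      have h2 := congr_arg SimpleGraph.Walk.length (px.take_spec hmem)
      rw [SimpleGraph.Walk.length_append] at h2
      have h3 : (px.dropUntil y hmem).length = 0 := by omega
      exact h.ne (SimpleGraph.Walk.eq_of_length_eq_zero h3).symm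
    have hq : (px.concat h).IsPath := concat_isPath hpx hys h
    have huniq := SimpleGraph.isAcyclic_iff_path_unique.mp hT.IsAcyclic
      (⟨px.concat h, hq⟩ : T.Path r y) ⟨py, hpy⟩
    have := congr_arg (fun (p : T.Path r y) => p.val.length) huniq
    simp only [SimpleGraph.Walk.length_concat] at this
    omega
  omega

lemma tree_down_unique (hT : T.IsTree) (r : V) {a b v : V} (ha : T.Adj a v) (hb : T.Adj b v)
    (hda : T.dist r a + 1 = T.dist r v) (hdb : T.dist r b + 1 = T.dist r v) : a = b := by
  have hc := hT.isConnected
  obtain ⟨pa, hpa, hla⟩ := (hc r a).exists_path_of_dist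
  obtain ⟨pb, hpb, hlb⟩ := (hc r b).exists_path_of_dist
  have hva : v ∉ pa.support := not_mem_support hc pa hla (by omega)
  have hvb : v ∉ pb.support := not_mem_support hc pb hlb (by omega)
  have hqa : (pa.concat ha).IsPath := concat_isPath hpa hva ha
  have hqb : (pb.concat hb).IsPath := concat_isPath hpb hvb hb
  have huniq := SimpleGraph.isAcyclic_iff_path_unique.mp hT.IsAcyclic
    (⟨pa.concat ha, hqa⟩ : T.Path r v) ⟨pb.concat hb, hqb⟩
  have heq : pa.concat ha = pb.concat hb := congr_arg Subtype.val huniq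
  obtain ⟨hv, -⟩ := SimpleGraph.Walk.concat_inj heq
  exact hv

lemma tree_parent (hT : T.IsTree) (r : V) {v : V} (h : v ≠ r) :
    ∃ p, T.Adj p v ∧ T.dist r p + 1 = T.dist r v := by
  have hc := hT.isConnected
  have hd : T.dist v r ≠ 0 := fun h0 => h ((hc.dist_eq_zero_iff).mp h0)
  obtain ⟨k, hk⟩ : ∃ k, T.dist v r = k + 1 := ⟨T.dist v r - 1, by omega⟩
  obtain ⟨m, hm, hdm⟩ := dist_succ hc hk
  exact ⟨m, hm.symm, by rw [SimpleGraph.dist_comm] at hk hdm; omega⟩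

end TreeAux

namespace TreeAux
variable {V : Type*} {T : SimpleGraph V}

lemma stepDist (hT : T.IsTree) (r : V) {v p w : V}
    (hpv : T.Adj p v) (hd : T.dist r p + 1 = T.dist r v)
    (hw1 : ¬(p = w ∨ T.Adj p w))
    (hg : ∀ gg, T.Adj gg p → T.dist r gg + 1 = T.dist r p → ¬(gg = w ∨ T.Adj gg w))
    (hdep : T.dist r w ≤ T.dist r v) : 3 < T.dist v w := by
  have hc := hT.isConnected
  push_neg at hw1
  obtain ⟨hw1a, hw1b⟩ := hw1
  by_contra hle
  push_neg at hle
  interval_cases hdist : T.dist v w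
  · -- dist 0 : v = w
    have : v = w := hc.dist_eq_zero_iff.mp hdist
    exact hw1b (this ▸ hpv)
  · -- dist 1 : adj v w
    have hvw : T.Adj v w := dist_one_adj hc hdist
    rcases tree_parity hT r hvw with h1 | h1
    · omega
    · exact hw1a (tree_down_unique hT r hpv hvw.symm hd h1)
  · -- dist 2
    obtain ⟨a, hva, haw⟩ := dist_succ hc hdist
    have haw' : T.Adj a w := dist_one_adj hc haw
    by_cases hap : a = p
    · exact hw1b (hap ▸ haw')
    · have hda : T.dist r v + 1 = T.dist r a := by
        rcases tree_parity hT r hva with h1 | h1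
        · exact h1
        · exact absurd (tree_down_unique hT r hva.symm hpv h1 hd) hap
      rcases tree_parity hT r haw' with h1 | h1
      · omega
      · have : w = v := tree_down_unique hT r haw'.symm hva h1 hda
        rw [this] at hdist
        rw [hc.dist_eq_zero_iff.mpr rfl] at hdist
        omega
  · -- dist 3
    obtain ⟨a, hva, haw⟩ := dist_succ hc hdist
    obtain ⟨b, hab, hbw⟩ := dist_succ hc haw
    have hbw' : T.Adj b w := dist_one_adj hc hbw
    have hbv : b ≠ v := by
      intro hbv
      rw [hbv] at hbw
      omega
    by_cases hap : a = p
    · subst hap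
      rcases tree_parity hT r hab with h1 | h1
      · -- b is deeper than a = p : d b = d p + 1 = d v
        rcases tree_parity hT r hbw' with h2 | h2
        · omega
        · exact hw1a (tree_down_unique hT r hab hbw'.symm h1 h2)
      · -- b is the parent of p
        exact hg b hab.symm h1 (Or.inr hbw')
    · have hda : T.dist r v + 1 = T.dist r a := by
        rcases tree_parity hT r hva with h1 | h1
        · exact h1
        · exact absurd (tree_down_unique hT r hva.symm hpv h1 hd) hap
      have hdb : T.dist r a + 1 = T.dist r b := by
        rcases tree_parity hT r hab with h1 | h1
        · exact h1
        · exact absurd (tree_down_unique hT r hab.symm hva h1 hda) hbv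
      rcases tree_parity hT r hbw' with h2 | h2 <;> omega

end TreeAux

namespace TreeAux
variable {V : Type*} {T : SimpleGraph V} [DecidableEq V]

def Dset (P : Finset V) (f g : V → V) : Finset V := P.biUnion fun x => {f x, g x}

def Uset (T : SimpleGraph V) (P : Finset V) (f g : V → V) : Set V :=
  {w | ∀ u ∈ Dset P f g, ¬(u = w ∨ T.Adj u w)}

lemma mem_Dset {P : Finset V} {f g : V → V} {u : V} :
    u ∈ Dset P f g ↔ ∃ x ∈ P, u = f x ∨ u = g x := by
  simp [Dset]

lemma not_mem_Uset {P : Finset V} {f g : V → V} {w : V} :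
    w ∉ Uset T P f g ↔ ∃ u ∈ Dset P f g, (u = w ∨ T.Adj u w) := by
  simp only [Uset, Set.mem_setOf_eq]
  push_neg
  rfl

lemma build [Fintype V] (hT : T.IsTree) (r b0 : V) (hrb : T.Adj r b0) :
    ∀ (n : ℕ) (P : Finset V) (f g : V → V),
    (∀ x ∈ P, T.Adj (f x) (g x)) →
    (∀ x ∈ P, ∀ y ∈ P, x ≠ y → f x ≠ f y ∧ f x ≠ g y ∧ g x ≠ f y ∧ g x ≠ g y) →
    ((P : Set V).Pairwise fun u v => 3 < T.dist u v) →
    (∀ w ∈ Uset T P f g, ∀ x ∈ P, 3 < T.dist x w) →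
    (Uset T P f g).ncard ≤ n →
    ∃ (P' : Finset V) (f' g' : V → V),
      (∀ x ∈ P', T.Adj (f' x) (g' x)) ∧
      (∀ x ∈ P', ∀ y ∈ P', x ≠ y → f' x ≠ f' y ∧ f' x ≠ g' y ∧ g' x ≠ f' y ∧ g' x ≠ g' y) ∧
      ((P' : Set V).Pairwise fun u v => 3 < T.dist u v) ∧
      (∀ w : V, ∃ u ∈ Dset P' f' g', u = w ∨ T.Adj u w) := by
  have hc := hT.isConnected
  intro n
  induction n with
  | zero =>
    intro P f g hadj hdisj hpack hU4 hcard
    refine ⟨P, f, g, hadj, hdisj, hpack, fun w => ?_⟩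
    rw [← not_mem_Uset]
    intro hw
    have : (Uset T P f g).ncard = 0 := le_antisymm hcard (Nat.zero_le _)
    rw [Set.ncard_eq_zero (Set.toFinite _)] at this
    rw [this] at hw
    exact hw
  | succ n ih =>
    intro P f g hadj hdisj hpack hU4 hcard
    by_cases hUe : Uset T P f g = ∅
    · refine ⟨P, f, g, hadj, hdisj, hpack, fun w => ?_⟩
      rw [← not_mem_Uset]
      rw [hUe]
      exact fun h => h
    · -- pick a vertex of maximal depth in U
      obtain ⟨v, hvUF, hvmax⟩ := Finset.exists_max_image
        ((Set.toFinite (Uset T P f g)).toFinset) (fun w => T.dist r w)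
        (by rwa [Set.Finite.toFinset_nonempty, Set.nonempty_iff_ne_empty])
      rw [Set.Finite.mem_toFinset] at hvUF
      have hvmax' : ∀ w ∈ Uset T P f g, T.dist r w ≤ T.dist r v := by
        intro w hw
        exact hvmax w ((Set.Finite.mem_toFinset _).mpr hw)
      have hvP : v ∉ P := by
        intro hvP
        have := hU4 v hvUF v hvP
        rw [hc.dist_eq_zero_iff.mpr rfl] at this
        omega
      have hvD : v ∉ Dset P f g := by
        intro hvD
        exact hvUF v hvD (Or.inl rfl)
      -- generic bookkeeping for inserting a new pair (α, β)
      have key : ∀ α β : V, T.Adj α β → α ∉ Dset P f g → β ∉ Dset P f g →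
          (∀ x ∈ insert v P, T.Adj (Function.update f v α x) (Function.update g v β x)) ∧
          (∀ x ∈ insert v P, ∀ y ∈ insert v P, x ≠ y →
            Function.update f v α x ≠ Function.update f v α y ∧
            Function.update f v α x ≠ Function.update g v β y ∧
            Function.update g v β x ≠ Function.update f v α y ∧
            Function.update g v β x ≠ Function.update g v β y) ∧
          (((insert v P : Finset V) : Set V).Pairwise fun u w => 3 < T.dist u w) ∧
          (Dset (insert v P) (Function.update f v α) (Function.update g v β)
            = insert α (insert β (Dset P f g))) := by
        intro α β hαβ hαD hβD
        have hDeq : Dset (insert v P) (Function.update f v α) (Function.update g v β)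
            = insert α (insert β (Dset P f g)) := by
          rw [Dset, Finset.biUnion_insert]
          have : (P.biUnion fun x =>
              {Function.update f v α x, Function.update g v β x}) = Dset P f g := by
            rw [Dset]
            apply Finset.biUnion_congr rfl
            intro y hy
            have hyv : y ≠ v := fun h => hvP (h ▸ hy)
            rw [Function.update_of_ne hyv, Function.update_of_ne hyv]
          rw [this, Function.update_self, Function.update_self]
          ext u
          simp only [Finset.mem_union, Finset.mem_insert, Finset.mem_singleton]
          tauto
        refine ⟨?_, ?_, ?_, hDeq⟩
        · intro x hx
          rcases Finset.mem_insert.mp hx with hxv | hx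
          · rw [hxv, Function.update_self, Function.update_self]; exact hαβ
          · have hxv : x ≠ v := fun h => hvP (h ▸ hx)
            rw [Function.update_of_ne hxv, Function.update_of_ne hxv]
            exact hadj x hx
        · intro x hx y hy hxy
          have hfD : ∀ z ∈ P, f z ∈ Dset P f g := fun z hz =>
            mem_Dset.mpr ⟨z, hz, Or.inl rfl⟩
          have hgD : ∀ z ∈ P, g z ∈ Dset P f g := fun z hz =>
            mem_Dset.mpr ⟨z, hz, Or.inr rfl⟩
          rcases Finset.mem_insert.mp hx with hxv | hx
          · rcases Finset.mem_insert.mp hy with hyv | hy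
            · exact absurd (hxv.trans hyv.symm) hxy
            · have hyv : y ≠ v := fun h => hvP (h ▸ hy)
              rw [hxv, Function.update_self, Function.update_self,
                Function.update_of_ne hyv, Function.update_of_ne hyv]
              exact ⟨fun h => hαD (h ▸ hfD y hy), fun h => hαD (h ▸ hgD y hy),
                fun h => hβD (h ▸ hfD y hy), fun h => hβD (h ▸ hgD y hy)⟩
          · rcases Finset.mem_insert.mp hy with hyv | hy
            · have hxv : x ≠ v := fun h => hvP (h ▸ hx)
              rw [hyv, Function.update_self, Function.update_self,
                Function.update_of_ne hxv, Function.update_of_ne hxv]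
              exact ⟨fun h => hαD (h.symm ▸ hfD x hx), fun h => hβD (h.symm ▸ hfD x hx),
                fun h => hαD (h.symm ▸ hgD x hx), fun h => hβD (h.symm ▸ hgD x hx)⟩
            · have hxv : x ≠ v := fun h => hvP (h ▸ hx)
              have hyv : y ≠ v := fun h => hvP (h ▸ hy)
              rw [Function.update_of_ne hxv, Function.update_of_ne hxv,
                Function.update_of_ne hyv, Function.update_of_ne hyv]
              exact hdisj x hx y hy hxy
        · rw [Finset.coe_insert]
          have hsym : Symmetric fun u w : V => 3 < T.dist u w := by
            intro a b hab
            show 3 < T.dist b a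
            have hab' : 3 < T.dist a b := hab
            rwa [SimpleGraph.dist_comm]
          haveI : Std.Symm (fun u w : V => 3 < T.dist u w) := ⟨hsym⟩
          rw [Set.pairwise_insert_of_symm]
          refine ⟨hpack, fun b hb hbv => ?_⟩
          show 3 < T.dist v b
          rw [SimpleGraph.dist_comm]
          exact hU4 v hvUF b (Finset.mem_coe.mp hb)
      by_cases hvr : v = r
      · -- root case: the new pair dominates everything left
        have hαD : r ∉ Dset P f g := hvr ▸ hvD
        have hβD : b0 ∉ Dset P f g := by
          intro hmem
          exact hvUF b0 hmem (Or.inr (by rw [hvr]; exact hrb.symm))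
        obtain ⟨hadj', hdisj', hpack', hDeq⟩ := key r b0 hrb hαD hβD
        refine ⟨insert v P, Function.update f v r, Function.update g v b0,
          hadj', hdisj', hpack', fun w => ?_⟩
        rw [← not_mem_Uset]
        intro hw
        have hwU : w ∈ Uset T P f g := by
          intro u hu
          exact hw u (by rw [hDeq]; exact Finset.mem_insert_of_mem (Finset.mem_insert_of_mem hu))
        have hle : T.dist r w ≤ T.dist r v := hvmax' w hwU
        rw [hvr] at hle
        rw [hc.dist_eq_zero_iff.mpr rfl] at hle
        have hwr : r = w := hc.dist_eq_zero_iff.mp (Nat.le_zero.mp hle)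
        exact hw r (by rw [hDeq]; exact Finset.mem_insert_self _ _) (Or.inl hwr)
      · obtain ⟨p, hpv, hd⟩ := tree_parent hT r hvr
        have hpD : p ∉ Dset P f g := fun hmem => hvUF p hmem (Or.inr hpv)
        have finish : ∀ α β : V, T.Adj α β → α ∉ Dset P f g → β ∉ Dset P f g →
            (p = α ∨ p = β) →
            ((α = v ∨ T.Adj α v) ∨ (β = v ∨ T.Adj β v)) →
            (∀ gg, T.Adj gg p → T.dist r gg + 1 = T.dist r p →
              (gg ∈ Dset P f g ∨ gg = α ∨ gg = β)) →
            ∃ (P' : Finset V) (f' g' : V → V),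
              (∀ x ∈ P', T.Adj (f' x) (g' x)) ∧
              (∀ x ∈ P', ∀ y ∈ P', x ≠ y → f' x ≠ f' y ∧ f' x ≠ g' y ∧ g' x ≠ f' y ∧ g' x ≠ g' y) ∧
              ((P' : Set V).Pairwise fun u w => 3 < T.dist u w) ∧
              (∀ w : V, ∃ u ∈ Dset P' f' g', u = w ∨ T.Adj u w) := by
          intro α β hαβ hαD hβD hpmem hvdom hgg
          obtain ⟨hadj', hdisj', hpack', hDeq⟩ := key α β hαβ hαD hβD
          have hsubU : Uset T (insert v P) (Function.update f v α) (Function.update g v β)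
              ⊆ Uset T P f g := by
            intro w hw u hu
            exact hw u (by
              rw [hDeq]; exact Finset.mem_insert_of_mem (Finset.mem_insert_of_mem hu))
          have hU4' : ∀ w ∈ Uset T (insert v P) (Function.update f v α) (Function.update g v β),
              ∀ x ∈ insert v P, 3 < T.dist x w := by
            intro w hw x hx
            rcases Finset.mem_insert.mp hx with hxv | hx
            · rw [hxv]
              refine stepDist hT r hpv hd ?_ ?_ (hvmax' w (hsubU hw))
              · refine hw p ?_
                rw [hDeq]
                rcases hpmem with h | h
                · rw [← h]; exact Finset.mem_insert_self _ _
                · rw [← h]; exact Finset.mem_insert_of_mem (Finset.mem_insert_self _ _)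
              · intro gg hgg1 hgg2
                rcases hgg gg hgg1 hgg2 with h | h | h
                · exact hw gg (by
                    rw [hDeq]; exact Finset.mem_insert_of_mem (Finset.mem_insert_of_mem h))
                · exact hw gg (by rw [hDeq, h]; exact Finset.mem_insert_self _ _)
                · exact hw gg (by
                    rw [hDeq, h]; exact Finset.mem_insert_of_mem (Finset.mem_insert_self _ _))
            · exact hU4 w (hsubU hw) x hx
          have hcard' : (Uset T (insert v P) (Function.update f v α)
              (Function.update g v β)).ncard ≤ n := by
            have hss : Uset T (insert v P) (Function.update f v α) (Function.update g v β)
                ⊂ Uset T P f g := by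
              refine ⟨hsubU, fun hsup => ?_⟩
              have hvU' := hsup hvUF
              rcases hvdom with h | h
              · exact hvU' α (by rw [hDeq]; exact Finset.mem_insert_self _ _) h
              · exact hvU' β (by
                  rw [hDeq]; exact Finset.mem_insert_of_mem (Finset.mem_insert_self _ _)) h
            have := Set.ncard_lt_ncard hss (Set.toFinite _)
            omega
          exact ih (insert v P) (Function.update f v α) (Function.update g v β)
            hadj' hdisj' hpack' hU4' hcard'
        by_cases hcase : ∃ gg, T.Adj gg p ∧ T.dist r gg + 1 = T.dist r p ∧ gg ∈ Dset P f g
        · refine finish v p hpv.symm hvD hpD (Or.inr rfl) (Or.inl (Or.inl rfl)) ?_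
          intro gg h1 h2
          obtain ⟨gg', hg1, hg2, hg3⟩ := hcase
          have hggeq : gg = gg' := tree_down_unique hT r h1 hg1 h2 hg2
          exact Or.inl (hggeq ▸ hg3)
        · by_cases hpr : p = r
          · refine finish v p hpv.symm hvD hpD (Or.inr rfl) (Or.inl (Or.inl rfl)) ?_
            intro gg h1 h2
            rw [hpr] at h2
            rw [hc.dist_eq_zero_iff.mpr rfl] at h2
            omega
          · obtain ⟨g0, hg0p, hdg0⟩ := tree_parent hT r hpr
            have hg0D : g0 ∉ Dset P f g := fun hmem => hcase ⟨g0, hg0p, hdg0, hmem⟩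
            refine finish p g0 hg0p.symm hpD hg0D (Or.inl rfl) (Or.inl (Or.inr hpv)) ?_
            intro gg h1 h2
            exact Or.inr (Or.inr (tree_down_unique hT r h1 hg0p h2 hdg0))

end TreeAux

namespace TreeAux
variable {V : Type*} {T : SimpleGraph V} [DecidableEq V]

lemma upper [Fintype V] (hT : T.IsTree) {a b : V} (hab : T.Adj a b) :
    ∃ (Pset Dst : Set V), T.Packing3 Pset ∧ T.PairedDominating Dst ∧
      Dst.ncard = 2 * Pset.ncard := by
  have hc := hT.isConnected
  obtain ⟨P, f, g, hadj, hdisj, hpack, hdom⟩ := by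
    refine build hT a b hab (Fintype.card V) ∅ id id (by simp) (by simp) (by simp) ?_ ?_
    · intro w hw x hx
      exact absurd hx (Finset.notMem_empty x)
    · have h1 := Set.ncard_le_ncard (Set.subset_univ (Uset T ∅ id id)) (Set.toFinite _)
      rwa [Set.ncard_univ, Nat.card_eq_fintype_card] at h1
  refine ⟨(P : Set V), ((Dset P f g : Finset V) : Set V), ?_, ⟨?_, ?_⟩, ?_⟩
  · intro u hu w hw huw
    exact Or.inr (hpack hu hw huw)
  · intro w
    obtain ⟨u, hu, h⟩ := hdom w
    exact ⟨u, Finset.mem_coe.mpr hu, h⟩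
  · -- perfect matching
    have hne : ∀ x ∈ P, f x ≠ g x := fun x hx => (hadj x hx).ne
    refine ⟨{ verts := Set.univ
              Adj := fun c d => ∃ x ∈ P, ((c : V) = f x ∧ (d : V) = g x) ∨
                ((c : V) = g x ∧ (d : V) = f x)
              adj_sub := ?_
              edge_vert := fun _ => Set.mem_univ _
              symm := ?_ }, ?_, fun v => Set.mem_univ v⟩
    · rintro c d ⟨x, hx, ⟨h1, h2⟩ | ⟨h1, h2⟩⟩
      · show T.Adj (c : V) (d : V)
        rw [h1, h2]; exact hadj x hx
      · show T.Adj (c : V) (d : V)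
        rw [h1, h2]; exact (hadj x hx).symm
    · constructor
      rintro c d ⟨x, hx, ⟨h1, h2⟩ | ⟨h1, h2⟩⟩
      · exact ⟨x, hx, Or.inr ⟨h2, h1⟩⟩
      · exact ⟨x, hx, Or.inl ⟨h2, h1⟩⟩
    · -- IsMatching
      rintro ⟨u, hu⟩ -
      obtain ⟨x, hx, hufg⟩ := mem_Dset.mp (Finset.mem_coe.mp hu)
      have hfmem : ∀ y ∈ P, f y ∈ ((Dset P f g : Finset V) : Set V) := fun y hy =>
        Finset.mem_coe.mpr (mem_Dset.mpr ⟨y, hy, Or.inl rfl⟩)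
      have hgmem : ∀ y ∈ P, g y ∈ ((Dset P f g : Finset V) : Set V) := fun y hy =>
        Finset.mem_coe.mpr (mem_Dset.mpr ⟨y, hy, Or.inr rfl⟩)
      rcases hufg with hu1 | hu1
      · refine ⟨⟨g x, hgmem x hx⟩, ⟨x, hx, Or.inl ⟨hu1, rfl⟩⟩, ?_⟩
        rintro ⟨z, hz⟩ ⟨y, hy, ⟨h1, h2⟩ | ⟨h1, h2⟩⟩
        · have hxy : x = y := by
            by_contra hxy
            exact (hdisj x hx y hy hxy).1 (hu1.symm.trans h1)
          exact Subtype.ext ((h2 : z = g y).trans (congrArg g hxy.symm))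
        · exfalso
          have hxy : x = y := by
            by_contra hxy
            exact (hdisj x hx y hy hxy).2.1 (hu1.symm.trans h1)
          exact hne x hx ((hu1.symm.trans h1).trans (congrArg g hxy.symm))
      · refine ⟨⟨f x, hfmem x hx⟩, ⟨x, hx, Or.inr ⟨hu1, rfl⟩⟩, ?_⟩
        rintro ⟨z, hz⟩ ⟨y, hy, ⟨h1, h2⟩ | ⟨h1, h2⟩⟩
        · exfalso
          have hxy : x = y := by
            by_contra hxy
            exact (hdisj y hy x hx (fun h => hxy h.symm)).2.1 (hu1.symm.trans h1).symm
          exact hne x hx (((congrArg f hxy).trans h1.symm).trans hu1)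
        · have hxy : x = y := by
            by_contra hxy
            exact (hdisj x hx y hy hxy).2.2.2 (hu1.symm.trans h1)
          exact Subtype.ext ((h2 : z = f y).trans (congrArg f hxy.symm))
  · -- cardinality
    rw [Set.ncard_coe_finset, Set.ncard_coe_finset]
    rw [Dset, Finset.card_biUnion]
    · rw [Finset.sum_congr rfl (g := fun _ => 2) (fun x hx => by
        rw [Finset.card_insert_of_notMem (by simp [(hadj x hx).ne]), Finset.card_singleton])]
      rw [Finset.sum_const, smul_eq_mul, mul_comm]
    · intro x hx y hy hxy
      rw [Function.onFun, Finset.disjoint_left]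
      intro u hu hu'
      simp only [Finset.mem_insert, Finset.mem_singleton] at hu hu'
      obtain ⟨d1, d2, d3, d4⟩ := hdisj x hx y hy hxy
      rcases hu with rfl | rfl <;> rcases hu' with h | h <;> simp_all

end TreeAux


namespace TreeAux
variable {V : Type*} {T : SimpleGraph V}

lemma adj_dist_le_one {a c : V} (h : T.Adj a c) : T.dist a c ≤ 1 := by
  have := SimpleGraph.dist_le (SimpleGraph.Walk.cons h SimpleGraph.Walk.nil)
  simpa using this

lemma lower [Fintype V] (hc : T.Connected) {D Pst : Set V} (hD : T.PairedDominating D)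
    (hP : T.Packing3 Pst) : 2 * Pst.ncard ≤ D.ncard := by
  classical
  obtain ⟨hdom, M, hM⟩ := hD
  choose u humem hadj using hdom
  have hpart : ∀ c : ↥D, ∃! d : ↥D, M.Adj c d := fun c => hM.1 (hM.2 c)
  choose pf hpf hpfu using hpart
  have hMadj : ∀ c : ↥D, T.Adj (c : V) (pf c : V) := fun c => M.adj_sub (hpf c)
  have hpfinj : ∀ c d : ↥D, pf c = pf d → c = d := by
    intro c d hcd
    have h1 : M.Adj (pf c) c := M.adj_symm (hpf c)
    have h2 : M.Adj (pf c) d := hcd ▸ M.adj_symm (hpf d)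
    exact (hpfu (pf c) c h1).trans (hpfu (pf c) d h2).symm
  set pfn : V → V := fun y => if h : y ∈ D then (pf ⟨y, h⟩ : V) else y with hpfn
  have hfact : ∀ y (h : y ∈ D), pfn y ∈ D ∧ T.Adj y (pfn y) := by
    intro y h
    simp only [hpfn, dif_pos h]
    exact ⟨(pf ⟨y, h⟩).2, hMadj ⟨y, h⟩⟩
  have hd1 : ∀ x, T.dist x (u x) ≤ 1 := by
    intro x
    rcases hadj x with h | h
    · rw [h]
      simp [SimpleGraph.dist_self]
    · rw [SimpleGraph.dist_comm]
      exact adj_dist_le_one h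
  have hd1' : ∀ x, T.dist (u x) x ≤ 1 := by
    intro x
    rw [SimpleGraph.dist_comm]
    exact hd1 x
  have hdistP : ∀ x ∈ Pst, ∀ y ∈ Pst, x ≠ y → 3 < T.dist x y := by
    intro x hx y hy hxy
    rcases hP hx hy hxy with h | h
    · exact absurd (hc.preconnected x y) h
    · exact h
  set PF : Finset V := (Set.toFinite Pst).toFinset with hPF
  have hmemPF : ∀ {x}, x ∈ PF ↔ x ∈ Pst := fun {x} => Set.Finite.mem_toFinset _
  set DF : Finset V := PF.biUnion (fun x => {u x, pfn (u x)}) with hDF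
  have hsub : (DF : Set V) ⊆ D := by
    intro e he
    simp only [hDF, Finset.coe_biUnion, Set.mem_iUnion, Finset.mem_coe, Finset.mem_insert,
      Finset.mem_singleton] at he
    obtain ⟨x, hx, he⟩ := he
    rcases he with rfl | rfl
    · exact humem x
    · exact (hfact (u x) (humem x)).1
  have hDFcard : DF.card = 2 * Pst.ncard := by
    rw [hDF, Finset.card_biUnion]
    · rw [Finset.sum_congr rfl (g := fun _ => 2) (fun x hx => by
        rw [Finset.card_insert_of_notMem
          (by simp [(hfact (u x) (humem x)).2.ne]), Finset.card_singleton])]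
      rw [Finset.sum_const, smul_eq_mul, mul_comm, hPF,
        Set.ncard_eq_toFinset_card Pst (Set.toFinite Pst)]
    · intro x hx y hy hxy
      have hxyP : 3 < T.dist x y := hdistP x (hmemPF.mp hx) y (hmemPF.mp hy) hxy
      rw [Function.onFun, Finset.disjoint_left]
      intro e he he'
      simp only [Finset.mem_insert, Finset.mem_singleton] at he he'
      have huu : u x ≠ u y := by
        intro hequ
        have h1 : T.dist x y ≤ T.dist x (u x) + T.dist (u x) y := hc.dist_triangle
        have h2 := hd1 x
        have h3 : T.dist (u x) y ≤ 1 := by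
          rw [hequ]
          exact hd1' y
        omega
      have hadj2 : ¬ T.Adj (u x) (u y) := by
        intro hadj2
        have h1 : T.dist x y ≤ T.dist x (u x) + T.dist (u x) y := hc.dist_triangle
        have h2 : T.dist (u x) y ≤ T.dist (u x) (u y) + T.dist (u y) y := hc.dist_triangle
        have h3 := adj_dist_le_one hadj2
        have h4 := hd1 x
        have h5 := hd1' y
        omega
      rcases he with rfl | rfl <;> rcases he' with h | h
      · exact huu h
      · exact hadj2 (by rw [h]; exact (hfact (u y) (humem y)).2.symm)
      · exact hadj2 (by rw [← h]; exact (hfact (u x) (humem x)).2)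
      · apply huu
        have heq2 := hpfinj ⟨u x, humem x⟩ ⟨u y, humem y⟩ (by
          apply Subtype.ext
          have hx' := h
          simpa only [hpfn, dif_pos (humem x), dif_pos (humem y)] using hx')
        exact congrArg Subtype.val heq2
  calc 2 * Pst.ncard = DF.card := hDFcard.symm
    _ = (DF : Set V).ncard := (Set.ncard_coe_finset DF).symm
    _ ≤ D.ncard := Set.ncard_le_ncard hsub (Set.toFinite D)

end TreeAux

theorem stmt9 {V : Type*} [Fintype V] (T : SimpleGraph V) (hT : T.IsTree)
    (he : ∃ a b, T.Adj a b) :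
    T.pairedDomNum = 2 * T.packNum3 := by
  classical
  obtain ⟨a, b, hab⟩ := he
  have hc := hT.isConnected
  obtain ⟨P0, D0, hP0, hD0, hcard0⟩ := TreeAux.upper hT hab
  have hSprNe : {n | ∃ D : Set V, T.PairedDominating D ∧ D.ncard = n}.Nonempty :=
    ⟨D0.ncard, D0, hD0, rfl⟩
  have hSpNe : {n | ∃ P : Set V, T.Packing3 P ∧ P.ncard = n}.Nonempty :=
    ⟨P0.ncard, P0, hP0, rfl⟩
  have hBdd : BddAbove {n | ∃ P : Set V, T.Packing3 P ∧ P.ncard = n} := by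
    refine ⟨Fintype.card V, fun n hn => ?_⟩
    obtain ⟨P, hP, rfl⟩ := hn
    have := Set.ncard_le_ncard (Set.subset_univ P) (Set.toFinite _)
    rwa [Set.ncard_univ, Nat.card_eq_fintype_card] at this
  obtain ⟨Ds, hDs, hDscard⟩ := Nat.sInf_mem hSprNe
  obtain ⟨Ps, hPs, hPscard⟩ := Nat.sSup_mem hSpNe hBdd
  have hlow : 2 * Ps.ncard ≤ Ds.ncard := TreeAux.lower hc hDs hPs
  have hA : T.pairedDomNum ≤ D0.ncard := Nat.sInf_le ⟨D0, hD0, rfl⟩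
  have hB : P0.ncard ≤ T.packNum3 := le_csSup hBdd ⟨P0, hP0, rfl⟩
  have hC : T.pairedDomNum = Ds.ncard := hDscard.symm
  have hE : T.packNum3 = Ps.ncard := hPscard.symm
  omega
end

section
/- Let G be a graph on n vertices and let G' be formed by attaching to each vertex of G a new path on 2 vertices via a bridge (i.e., for each v ∈ V(G) add new vertices x_v, y_v with edges v–y_v and y_v–x_v). Then γ_pr(G') = 2n and ρ_3(G') = n. -/
set_option linter.unusedVariables false
set_option linter.unnecessarySeqFocus false

open SimpleGraph

variable {V : Type*} {W : Type*}

open Classical in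
/-- Potential function for distance lower bounds in `attachPaths2 G`, relative to `w`. -/
noncomputable def pot (w : V) (p : V × Fin 3) : ℕ :=
  if p.1 = w then 2 - (p.2 : ℕ) else 3 + (p.2 : ℕ)

lemma pot_adj {G : SimpleGraph V} {w : V} {p q : V × Fin 3}
    (h : (attachPaths2 G).Adj p q) : pot w p ≤ pot w q + 1 := by
  classical
  obtain ⟨a, i⟩ := p
  obtain ⟨b, j⟩ := q
  rcases h with ⟨hi, hj, hab⟩ | ⟨hab, hij⟩
  · have hne : a = w → b ≠ w := by rintro rfl rfl; exact G.irrefl hab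
    subst hi; subst hj
    by_cases ha : a = w <;> by_cases hb : b = w <;> simp_all [pot]
  · subst hab
    have : i = 0 ∧ j = 1 ∨ i = 1 ∧ j = 0 ∨ i = 1 ∧ j = 2 ∨ i = 2 ∧ j = 1 := hij
    by_cases ha : a = w <;>
      rcases this with ⟨rfl, rfl⟩ | ⟨rfl, rfl⟩ | ⟨rfl, rfl⟩ | ⟨rfl, rfl⟩ <;>
      simp [pot, ha]

lemma pot_walk {G : SimpleGraph V} {w : V} {p q : V × Fin 3}
    (W : (attachPaths2 G).Walk p q) : pot w p ≤ pot w q + W.length := by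
  induction W with
  | nil => simp
  | cons h W ih =>
      have := pot_adj (w := w) h
      simp only [SimpleGraph.Walk.length_cons]
      omega

lemma adj_fst {G : SimpleGraph V} {p q : V × Fin 3}
    (h : (attachPaths2 G).Adj p q) (hp : p.2 ≠ 0) : p.1 = q.1 := by
  rcases h with ⟨hi, _, _⟩ | ⟨hab, _⟩
  · exact absurd hi hp
  · exact hab
lemma adj_one_of_ne {G : SimpleGraph V} {v : V} {i : Fin 3} (hi : i ≠ 1) :
    (attachPaths2 G).Adj (v, i) (v, 1) := by
  fin_cases i
  · exact Or.inr ⟨rfl, Or.inl ⟨rfl, rfl⟩⟩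
  · exact absurd rfl hi
  · exact Or.inr ⟨rfl, Or.inr (Or.inr (Or.inr ⟨rfl, rfl⟩))⟩

lemma dist_fiber_le {G : SimpleGraph V} (v : V) (i j : Fin 3) :
    (attachPaths2 G).Reachable (v, i) (v, j) ∧ (attachPaths2 G).dist (v, i) (v, j) ≤ 3 := by
  have W1 : ∀ i : Fin 3, ∃ W : (attachPaths2 G).Walk (v, i) (v, 1), W.length ≤ 1 := by
    intro i
    by_cases hi : i = 1
    · subst hi; exact ⟨SimpleGraph.Walk.nil, by simp⟩
    · exact ⟨SimpleGraph.Walk.cons (adj_one_of_ne hi) SimpleGraph.Walk.nil, by simp⟩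
  obtain ⟨Wi, hWi⟩ := W1 i
  obtain ⟨Wj, hWj⟩ := W1 j
  refine ⟨⟨Wi.append Wj.reverse⟩, ?_⟩
  have := SimpleGraph.dist_le (Wi.append Wj.reverse)
  simp [SimpleGraph.Walk.length_append] at this
  omega

/-- Any 3-packing in `attachPaths2 G` has first coordinates pairwise distinct. -/
lemma packing_injOn {G : SimpleGraph V} {P : Set (V × Fin 3)}
    (hP : (attachPaths2 G).Packing3 P) : Set.InjOn Prod.fst P := by
  intro p hp q hq hfst
  by_contra hne
  obtain ⟨a, i⟩ := p
  obtain ⟨b, j⟩ := q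
  cases hfst
  have h := hP hp hq hne
  obtain ⟨hr, hd⟩ := dist_fiber_le (G := G) a i j
  rcases h with h | h
  · exact h hr
  · omega
lemma paired_two_in_fiber {G : SimpleGraph V} {D : Set (V × Fin 3)}
    (hD : (attachPaths2 G).PairedDominating D) (v : V) :
    ∃ u w, u ∈ D ∧ w ∈ D ∧ u ≠ w ∧ u.1 = v ∧ w.1 = v := by
  obtain ⟨hdom, M, hM⟩ := hD
  obtain ⟨u, huD, hu⟩ := hdom (v, 2)
  have hu' : u.1 = v ∧ u.2 ≠ 0 := by
    rcases hu with rfl | hadj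
    · exact ⟨rfl, by simp⟩
    · rcases hadj with ⟨_, h2, _⟩ | ⟨h1, h⟩
      · exact absurd h2 (by simp)
      · refine ⟨h1, ?_⟩
        rcases h with ⟨hi, hj⟩ | ⟨hi, hj⟩ | ⟨hi, hj⟩ | ⟨hi, hj⟩ <;> simp_all
  obtain ⟨w, hw, -⟩ := hM.1 (hM.2 ⟨u, huD⟩)
  have hadj : (attachPaths2 G).Adj u w.1 := M.adj_sub hw
  exact ⟨u, w.1, huD, w.2, hadj.ne, hu'.1, (adj_fst hadj hu'.2).symm.trans hu'.1⟩

lemma card_lower {D : Set (V × Fin 3)} [Fintype V]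
    (h : ∀ v, ∃ u w, u ∈ D ∧ w ∈ D ∧ u ≠ w ∧ u.1 = v ∧ w.1 = v) :
    2 * Fintype.card V ≤ D.ncard := by
  classical
  rw [Set.ncard_eq_toFinset_card' D]
  rw [Finset.card_eq_sum_card_fiberwise
    (f := Prod.fst) (t := Finset.univ) (fun p _ => Finset.mem_univ _)]
  have h2 : ∀ v : V, 2 ≤ (D.toFinset.filter fun p => p.1 = v).card := by
    intro v
    obtain ⟨u, w, hu, hw, hne, hu1, hw1⟩ := h v
    refine Finset.one_lt_card.mpr ⟨u, ?_, w, ?_, hne⟩ <;>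
      simp [Finset.mem_filter, Set.mem_toFinset, *]
  calc 2 * Fintype.card V = ∑ _v : V, 2 := by
        simp [Finset.sum_const, Finset.card_univ, mul_comm]
    _ ≤ ∑ v : V, (D.toFinset.filter fun p => p.1 = v).card :=
        Finset.sum_le_sum fun v _ => h2 v
/-- The candidate paired dominating set: all vertices on the pendant paths. -/
def F0 (V : Type*) [Fintype V] : Finset (V × Fin 3) :=
  Finset.univ ×ˢ ({1, 2} : Finset (Fin 3))

lemma mem_F0 {V : Type*} [Fintype V] {p : V × Fin 3} :
    p ∈ F0 V ↔ p.2 = 1 ∨ p.2 = 2 := by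
  simp [F0, Finset.mem_product]

lemma D0_dominating [Fintype V] (G : SimpleGraph V) :
    (attachPaths2 G).Dominating ↑(F0 V) := by
  rintro ⟨a, i⟩
  fin_cases i
  · refine ⟨(a, 1), by simp [mem_F0], Or.inr ?_⟩
    exact Or.inr ⟨rfl, Or.inr (Or.inl ⟨rfl, rfl⟩)⟩
  · exact ⟨(a, 1), by simp [mem_F0], Or.inl rfl⟩
  · exact ⟨(a, 2), by simp [mem_F0], Or.inl rfl⟩

/-- The perfect matching on the induced subgraph on `F0`. -/
def M0 [Fintype V] (G : SimpleGraph V) :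
    ((attachPaths2 G).induce ↑(F0 V)).Subgraph where
  verts := Set.univ
  Adj x y := x.1.1 = y.1.1 ∧ x.1.2 ≠ y.1.2
  adj_sub := by
    rintro ⟨⟨a, i⟩, hx⟩ ⟨⟨b, j⟩, hy⟩ ⟨h1, h2⟩
    rw [Finset.mem_coe, mem_F0] at hx hy
    obtain rfl : a = b := h1
    have h2' : i ≠ j := h2
    show (attachPaths2 G).Adj (a, i) (a, j)
    rcases hx with rfl | rfl <;> rcases hy with rfl | rfl
    · exact absurd rfl h2'
    · exact Or.inr ⟨rfl, Or.inr (Or.inr (Or.inl ⟨rfl, rfl⟩))⟩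
    · exact Or.inr ⟨rfl, Or.inr (Or.inr (Or.inr ⟨rfl, rfl⟩))⟩
    · exact absurd rfl h2'
  edge_vert := fun _ => trivial
  symm := ⟨fun x y ⟨h1, h2⟩ => ⟨h1.symm, Ne.symm h2⟩⟩

lemma M0_perfect [Fintype V] (G : SimpleGraph V) : (M0 G).IsPerfectMatching := by
  constructor
  · rintro ⟨⟨a, i⟩, hx⟩ -
    have hx' : i = 1 ∨ i = 2 := mem_F0.mp (Finset.mem_coe.mp hx)
    rcases hx' with rfl | rfl
    · refine ⟨⟨(a, 2), by simp [mem_F0]⟩, And.intro rfl (by decide : (1 : Fin 3) ≠ 2), ?_⟩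
      rintro ⟨⟨b, j⟩, hz⟩ h
      obtain ⟨h1, h2⟩ : a = b ∧ (1 : Fin 3) ≠ j := h
      have hz' : j = 1 ∨ j = 2 := mem_F0.mp (Finset.mem_coe.mp hz)
      obtain rfl : a = b := h1
      have h2' : (1 : Fin 3) ≠ j := h2
      obtain rfl : j = 2 := by
        rcases hz' with rfl | rfl
        · exact absurd rfl h2'.symm
        · rfl
      exact Subtype.ext rfl
    · refine ⟨⟨(a, 1), by simp [mem_F0]⟩, And.intro rfl (by decide : (2 : Fin 3) ≠ 1), ?_⟩
      rintro ⟨⟨b, j⟩, hz⟩ h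
      obtain ⟨h1, h2⟩ : a = b ∧ (2 : Fin 3) ≠ j := h
      have hz' : j = 1 ∨ j = 2 := mem_F0.mp (Finset.mem_coe.mp hz)
      obtain rfl : a = b := h1
      have h2' : (2 : Fin 3) ≠ j := h2
      obtain rfl : j = 1 := by
        rcases hz' with rfl | rfl
        · rfl
        · exact absurd rfl h2'.symm
      exact Subtype.ext rfl
  · exact fun v => Set.mem_univ v

lemma F0_card [Fintype V] : (F0 V).card = 2 * Fintype.card V := by
  rw [F0, Finset.card_product]
  simp [mul_comm]
theorem stmt10 {V : Type*} [Fintype V] (G : SimpleGraph V) :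
    (attachPaths2 G).pairedDomNum = 2 * Fintype.card V ∧
      (attachPaths2 G).packNum3 = Fintype.card V := by
  classical
  constructor
  · -- paired domination number
    have hmem : 2 * Fintype.card V ∈
        {n | ∃ D : Set (V × Fin 3), (attachPaths2 G).PairedDominating D ∧ D.ncard = n} := by
      refine ⟨↑(F0 V), ⟨D0_dominating G, M0 G, M0_perfect G⟩, ?_⟩
      rw [Set.ncard_coe_finset, F0_card]
    refine le_antisymm (Nat.sInf_le hmem) (le_csInf ⟨_, hmem⟩ ?_)
    rintro m ⟨D, hD, rfl⟩
    exact card_lower fun v => paired_two_in_fiber hD v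
  · -- 3-packing number
    have hmem : Fintype.card V ∈
        {n | ∃ P : Set (V × Fin 3), (attachPaths2 G).Packing3 P ∧ P.ncard = n} := by
      refine ⟨↑((Finset.univ : Finset V).image fun v => ((v, 2) : V × Fin 3)), ?_, ?_⟩
      · rintro p hp q hq hne
        simp only [Finset.coe_image, Set.mem_image, Finset.coe_univ, Set.mem_univ] at hp hq
        obtain ⟨a, -, rfl⟩ := hp
        obtain ⟨b, -, rfl⟩ := hq
        have hab : a ≠ b := fun h => hne (by rw [h])
        by_cases hr : (attachPaths2 G).Reachable (a, 2) (b, 2)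
        · right
          obtain ⟨W, hW⟩ := hr.exists_walk_length_eq_dist
          have hpw := pot_walk (w := b) W
          have h5 : pot b ((a, 2) : V × Fin 3) = 5 := by simp [pot, hab]
          have h0 : pot b ((b, 2) : V × Fin 3) = 0 := by simp [pot]
          omega
        · exact Or.inl hr
      · rw [Set.ncard_coe_finset,
          Finset.card_image_of_injective _ (fun a b h => (Prod.mk.injEq .. ▸ h).1),
          Finset.card_univ]
    have hbdd : ∀ m ∈ {n | ∃ P : Set (V × Fin 3),
        (attachPaths2 G).Packing3 P ∧ P.ncard = n}, m ≤ Fintype.card V := by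
      rintro m ⟨P, hP, rfl⟩
      calc P.ncard = (Prod.fst '' P).ncard := (Set.ncard_image_of_injOn (packing_injOn hP)).symm
        _ ≤ (Set.univ : Set V).ncard := Set.ncard_le_ncard (Set.subset_univ _) Set.finite_univ
        _ = Fintype.card V := by rw [Set.ncard_univ, Nat.card_eq_fintype_card]
    exact le_antisymm (csSup_le ⟨_, hmem⟩ hbdd) (le_csSup ⟨_, hbdd⟩ hmem)
end
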